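/- arXiv:2311.16736 — 8 statements merged into one kernel-verified Lean document; each statement's English description precedes it below -/
import Mathlib

section
/- The adapted coordinate straightens the self-similar vector field: let μ > 0, let a : (0,∞) × ℝ → ℝ be differentiable with ∂_φ a(β,φ) − ∂_β a(β,φ) ≠ 0 for all (β,φ), and define T(β,φ) = e^{a(β,φ)}(cos(β+φ), sin(β+φ)). Let ψ̃ : ℝ²∖{0} → ℝ be differentiable and set ψ(β,φ) = ψ̃(T(β,φ)). If ∂_β ψ(β,φ) = −μ·e^{2a(β,φ)} for all (β,φ) (equivalently a = (1/2)·log(−∂_βψ/μ)), then for every (β,φ) the vector ∇^⊥ψ̃(T(β,φ)) − μ·T(β,φ) is a scalar multiple of ∂_β T(β,φ); consequently the pullback under T of any integral curve of ∇^⊥ψ̃ − μz contained in the range of T has constant φ-component. -/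
open Set

noncomputable section

/-- Perpendicular gradient `∇^⊥ f = (−∂₂ f, ∂₁ f)`. -/
def gradPerp (f : ℂ → ℝ) (x : ℂ) : ℂ := ⟨-(fderiv ℝ f x Complex.I), fderiv ℝ f x 1⟩

/-- **The adapted coordinate straightens the self-similar vector field.**
Let `T(β,φ) = e^{a(β,φ)} (cos(β+φ), sin(β+φ))` with `a` differentiable and
`∂_φ a − ∂_β a ≠ 0`. If `ψ(β,φ) = ψ̃(T(β,φ))` satisfies `∂_β ψ = −μ e^{2a}`
(equivalently `a = (1/2) log(−∂_βψ/μ)`), then at every `(β,φ)` the vector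
`∇^⊥ψ̃(T(β,φ)) − μ T(β,φ)` is a scalar multiple of `∂_β T(β,φ)`. -/
theorem stmt5 (μ : ℝ) (hμ : 0 < μ) (a : ℝ → ℝ → ℝ)
    (hadiff : ∀ β : ℝ, 0 < β → ∀ φ : ℝ,
      DifferentiableAt ℝ (fun p : ℝ × ℝ => a p.1 p.2) (β, φ))
    (haφβ : ∀ β : ℝ, 0 < β → ∀ φ : ℝ,
      fderiv ℝ (fun p : ℝ × ℝ => a p.1 p.2) (β, φ) (0, 1) -
        fderiv ℝ (fun p : ℝ × ℝ => a p.1 p.2) (β, φ) (1, 0) ≠ 0)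
    (ψtil : ℂ → ℝ)
    (hψ : ∀ z : ℂ, z ≠ 0 → DifferentiableAt ℝ ψtil z) :
    let T : ℝ → ℝ → ℂ := fun β φ =>
      (Real.exp (a β φ) : ℂ) * Complex.exp (((β + φ : ℝ) : ℂ) * Complex.I)
    (∀ β : ℝ, 0 < β → ∀ φ : ℝ,
      deriv (fun b => ψtil (T b φ)) β = -μ * Real.exp (2 * a β φ)) →
    ∀ β : ℝ, 0 < β → ∀ φ : ℝ, ∃ c : ℝ,
      gradPerp ψtil (T β φ) - μ • T β φ = c • deriv (fun b => T b φ) β := by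
  intro T hcond0 β hβ φ
  set L := fderiv ℝ (fun p : ℝ × ℝ => a p.1 p.2) (β, φ) with hL
  set aβ := L (1, 0) with haβdef
  have hA : HasFDerivAt (fun p : ℝ × ℝ => a p.1 p.2) L (β, φ) := (hadiff β hβ φ).hasFDerivAt
  have hcurve : HasDerivAt (fun b : ℝ => (b, φ)) ((1 : ℝ), (0 : ℝ)) β :=
    (hasDerivAt_id β).prodMk (hasDerivAt_const β φ)
  have ha1 : HasDerivAt (fun b => a b φ) aβ β := by
    have := hA.comp_hasDerivAt β hcurve; exact this
  have hexp : HasDerivAt (fun b => Real.exp (a b φ)) (Real.exp (a β φ) * aβ) β := ha1.exp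
  have hexpC : HasDerivAt (fun b => (Real.exp (a b φ) : ℂ))
      ((Real.exp (a β φ) * aβ : ℝ) : ℂ) β := hexp.ofReal_comp
  have hlin : HasDerivAt (fun b : ℝ => (((b + φ : ℝ) : ℂ) * Complex.I)) Complex.I β := by
    have h1 : HasDerivAt (fun b : ℝ => ((b + φ : ℝ) : ℂ)) 1 β :=
      ((hasDerivAt_id β).add_const φ).ofReal_comp
    simpa using h1.mul_const Complex.I
  have hcexp : HasDerivAt (fun b : ℝ => Complex.exp (((b + φ : ℝ) : ℂ) * Complex.I))
      (Complex.I * Complex.exp (((β + φ : ℝ) : ℂ) * Complex.I)) β := by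
    simpa [mul_comm] using hlin.cexp
  have hT : HasDerivAt (fun b => T b φ) (((aβ : ℂ) + Complex.I) * T β φ) β := by
    have h : HasDerivAt (fun b => (Real.exp (a b φ) : ℂ) * Complex.exp (((b + φ : ℝ) : ℂ) * Complex.I)) _ β :=
      hexpC.mul hcexp
    convert h using 1
    simp only [T]
    push_cast
    ring
  have hT0 : T β φ ≠ 0 := by
    simp only [T]
    exact mul_ne_zero (by exact_mod_cast Real.exp_ne_zero _) (Complex.exp_ne_zero _)
  set D := fderiv ℝ ψtil (T β φ) with hD
  have hψd : HasFDerivAt ψtil D (T β φ) := (hψ _ hT0).hasFDerivAt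
  have hcomp : HasDerivAt (fun b => ψtil (T b φ)) (D (((aβ : ℂ) + Complex.I) * T β φ)) β :=
    hψd.comp_hasDerivAt β hT
  have hcond : D (((aβ : ℂ) + Complex.I) * T β φ) = -μ * Real.exp (2 * a β φ) := by
    rw [← hcomp.deriv]; exact hcond0 β hβ φ
  have hDv : ∀ v : ℂ, D v = v.re * D 1 + v.im * D Complex.I := by
    intro v
    have hv : v = v.re • (1 : ℂ) + v.im • Complex.I := by
      simp [Complex.real_smul, Complex.re_add_im]
    nth_rewrite 1 [hv]
    rw [map_add, map_smul, map_smul, smul_eq_mul, smul_eq_mul]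
  set p := (T β φ).re with hp
  set q := (T β φ).im with hq
  have habs : ‖T β φ‖ = Real.exp (a β φ) := by
    simp only [T]
    rw [norm_mul, Complex.norm_exp_ofReal_mul_I, mul_one, Complex.norm_real, Real.norm_eq_abs,
      abs_of_pos (Real.exp_pos _)]
  have he2 : p * p + q * q = Real.exp (2 * a β φ) := by
    have h1 : Complex.normSq (T β φ) = Real.exp (a β φ) ^ 2 := by
      rw [← Complex.sq_norm, habs]
    have h2 : Complex.normSq (T β φ) = p * p + q * q := Complex.normSq_apply _
    rw [← h2, h1, sq, ← Real.exp_add]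
    ring_nf
  have hvre : (((aβ : ℂ) + Complex.I) * T β φ).re = aβ * p - q := by
    simp [Complex.mul_re, hp, hq]
  have hvim : (((aβ : ℂ) + Complex.I) * T β φ).im = aβ * q + p := by
    simp [Complex.mul_im, hp, hq]
  have hcondR : (aβ * p - q) * D 1 + (aβ * q + p) * D Complex.I
      = -μ * Real.exp (2 * a β φ) := by
    rw [← hvre, ← hvim, ← hDv, hcond]
  -- the vector u and the direction v
  set v : ℂ := ((aβ : ℂ) + Complex.I) * T β φ with hv
  set u : ℂ := gradPerp ψtil (T β φ) - μ • T β φ with hu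
  have hvne : v ≠ 0 := by
    refine mul_ne_zero (fun h => ?_) hT0
    have := congrArg Complex.im h
    simp at this
  have hure : u.re = -(D Complex.I) - μ * p := by
    rw [hu]
    simp [gradPerp, ← hD, Complex.sub_re, Complex.smul_re, hp]
  have huim : u.im = D 1 - μ * q := by
    rw [hu]
    simp [gradPerp, ← hD, Complex.sub_im, Complex.smul_im, hq]
  have hnum : u.im * v.re - u.re * v.im = 0 := by
    rw [hure, huim, hvre, hvim]
    linear_combination hcondR + μ * he2
  have him : (u / v).im = 0 := by
    rw [Complex.div_im, div_sub_div_same, hnum, zero_div]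
  refine ⟨(u / v).re, ?_⟩
  have hreal : (u / v) = (((u / v).re : ℝ) : ℂ) := by
    apply Complex.ext <;> simp [him]
  calc u = u / v * v := (div_mul_cancel₀ u hvne).symm
    _ = (((u / v).re : ℝ) : ℂ) * v := by rw [← hreal]
    _ = (u / v).re • v := Complex.real_smul.symm
    _ = (u / v).re • deriv (fun b => T b φ) β := by rw [hT.deriv]
end
end

section
/- Separated form of the vorticity in adapted coordinates: let μ > 0, let a : (0,∞) × ℝ → ℝ be C², define T(β,φ) = e^{a(β,φ)}(cos(β+φ), sin(β+φ)), and assume ∂_φa − ∂_βa ≠ 0 everywhere. Let ψ̃ : ℝ²∖{0} → ℝ be C² and w̃ : ℝ²∖{0} → ℝ be C¹, and set ψ(β,φ) = ψ̃(T(β,φ)) and w(β,φ) = w̃(T(β,φ)). Assume: ∂_βψ(β,φ) = −μ·e^{2a(β,φ)} for all (β,φ); ∂_φψ(β,φ) − ∂_βψ(β,φ) > 0 for all (β,φ); and −w̃(z) + (∇^⊥ψ̃(z) − μz)·∇w̃(z) = 0 for all z in the range of T. Then the function (β,φ) ↦ (∂_φψ(β,φ) − ∂_βψ(β,φ))^{1/(2μ)}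 · w(β,φ) is independent of β; equivalently, there exists Ω : ℝ → ℝ such that w(β,φ) = (∂_φψ(β,φ) − ∂_βψ(β,φ))^{−1/(2μ)} · Ω(φ) for all (β,φ) ∈ (0,∞) × ℝ. -/
open Set

noncomputable section

set_option maxHeartbeats 1000000

/-- Real dot product on ℝ² realized as ℂ. -/
def dotR (a b : ℂ) : ℝ := a.re * b.re + a.im * b.im

/-- Gradient of a scalar function on ℝ² ≅ ℂ. -/
def grad2 (f : ℂ → ℝ) (x : ℂ) : ℂ := ⟨fderiv ℝ f x 1, fderiv ℝ f x Complex.I⟩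

lemma clm_basis (L : ℂ →L[ℝ] ℝ) (v : ℂ) : L v = L 1 * v.re + L Complex.I * v.im := by
  have h : v = v.re • (1:ℂ) + v.im • Complex.I := by
    apply Complex.ext <;> simp
  conv_lhs => rw [h, map_add, map_smul, map_smul]
  simp only [smul_eq_mul]; ring

lemma dot_grad (f : ℂ → ℝ) (z v : ℂ) : dotR (grad2 f z) v = fderiv ℝ f z v := by
  rw [clm_basis (fderiv ℝ f z) v]; simp [dotR, grad2]

lemma gradPerp_eq (f : ℂ → ℝ) (z : ℂ) : gradPerp f z = Complex.I * grad2 f z := by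
  apply Complex.ext <;> simp [gradPerp, grad2, Complex.mul_re, Complex.mul_im]

lemma dotR_comm (u v : ℂ) : dotR u v = dotR v u := by simp [dotR]; ring

lemma dotR_smul (s : ℝ) (u v : ℂ) : dotR (s • u) v = s * dotR u v := by
  simp [dotR, Complex.smul_re, Complex.smul_im]; ring

lemma const_of_deriv_zero (f : ℝ → ℝ) (h : ∀ x ∈ Ioi (0:ℝ), HasDerivAt f 0 x)
    (β : ℝ) (hβ : 0 < β) : f β = f 1 := by
  have key : ∀ c d : ℝ, 0 < c → ∀ x ∈ Icc c d, f x = f c := by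
    intro c d hc x hx
    apply constant_of_has_deriv_right_zero (f := f)
    · intro y hy
      exact ((h y (mem_Ioi.2 (lt_of_lt_of_le hc hy.1))).continuousAt).continuousWithinAt
    · intro y hy
      exact ((h y (mem_Ioi.2 (lt_of_lt_of_le hc hy.1))).hasDerivWithinAt)
    · exact hx
  rcases le_total β 1 with hb | hb
  · have := key β 1 hβ 1 ⟨hb, le_refl 1⟩; rw [this]
  · have := key 1 β one_pos β ⟨hb, le_refl β⟩; rw [this]

lemma keyXr (gr gi zr zi c₁ c₂ μ q E s : ℝ) (hE : E = zr^2 + zi^2) (hEne : E ≠ 0)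
    (h1 : gr*(c₁*zr - zi) + gi*(c₁*zi + zr) = -μ*E)
    (h2 : gr*(c₂*zr - zi) + gi*(c₂*zi + zr) = q)
    (hc : c₂ - c₁ ≠ 0) (hs : s = (q + μ*E)/((c₂-c₁)*E)) :
    (-gi - μ*zr = s*(c₁*zr - zi)) ∧ (gr - μ*zi = s*(c₁*zi + zr)) := by
  subst hE hs
  constructor
  · field_simp
    linear_combination ((c₂-c₁)*(-zr) - (c₁*zr - zi)) * h1 + (c₁*zr - zi) * h2
  · field_simp
    linear_combination ((c₂-c₁)*(-zi) - (c₁*zi + zr)) * h1 + (c₁*zi + zr) * h2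

lemma keyX (g z : ℂ) (c₁ c₂ μ q E s : ℝ) (hE : E = z.re^2 + z.im^2) (hEne : E ≠ 0)
    (h1 : dotR g ((c₁:ℂ)*z + Complex.I*z) = -μ*E)
    (h2 : dotR g ((c₂:ℂ)*z + Complex.I*z) = q)
    (hc : c₂ - c₁ ≠ 0) (hs : s = (q + μ*E)/((c₂-c₁)*E)) :
    Complex.I*g - μ•z = s • ((c₁:ℂ)*z + Complex.I*z) := by
  simp only [dotR, Complex.add_re, Complex.add_im, Complex.mul_re, Complex.mul_im,
    Complex.I_re, Complex.I_im, Complex.ofReal_re, Complex.ofReal_im] at h1 h2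
  have h1' : g.re*(c₁*z.re - z.im) + g.im*(c₁*z.im + z.re) = -μ*E := by linarith [h1]
  have h2' : g.re*(c₂*z.re - z.im) + g.im*(c₂*z.im + z.re) = q := by linarith [h2]
  obtain ⟨e1, e2⟩ := keyXr g.re g.im z.re z.im c₁ c₂ μ q E s hE hEne h1' h2' hc hs
  apply Complex.ext
  · simp only [Complex.sub_re, Complex.mul_re, Complex.mul_im, Complex.smul_re,
      Complex.add_re, Complex.add_im, Complex.I_re, Complex.I_im, Complex.ofReal_re,
      Complex.ofReal_im, smul_eq_mul]
    linear_combination e1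
  · simp only [Complex.sub_im, Complex.mul_re, Complex.mul_im, Complex.smul_im,
      Complex.add_re, Complex.add_im, Complex.I_re, Complex.I_im, Complex.ofReal_re,
      Complex.ofReal_im, smul_eq_mul]
    linear_combination e2

/-- **Separated form of the vorticity in adapted coordinates.**
With `T(β,φ) = e^{a(β,φ)}(cos(β+φ), sin(β+φ))`, `ψ = ψ̃ ∘ T`, `w = w̃ ∘ T`, assume
`∂_βψ = −μ e^{2a}`, `∂_φψ − ∂_βψ > 0`, and the reduced Euler equation
`−w̃ + (∇^⊥ψ̃ − μz)·∇w̃ = 0` on the range of `T`. Then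
`(∂_φψ − ∂_βψ)^{1/(2μ)} w` is independent of `β`: there is `Ω : ℝ → ℝ` with
`w(β,φ) = (∂_φψ(β,φ) − ∂_βψ(β,φ))^{−1/(2μ)} Ω(φ)` for all `β > 0`, `φ`. -/
theorem stmt6 (μ : ℝ) (hμ : 0 < μ) (a : ℝ → ℝ → ℝ)
    (ha : ∀ β : ℝ, 0 < β → ∀ φ : ℝ,
      ContDiffAt ℝ 2 (fun p : ℝ × ℝ => a p.1 p.2) (β, φ))
    (haφβ : ∀ β : ℝ, 0 < β → ∀ φ : ℝ,
      fderiv ℝ (fun p : ℝ × ℝ => a p.1 p.2) (β, φ) (0, 1) -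
        fderiv ℝ (fun p : ℝ × ℝ => a p.1 p.2) (β, φ) (1, 0) ≠ 0)
    (ψtil wtil : ℂ → ℝ)
    (hψ : ∀ z : ℂ, z ≠ 0 → ContDiffAt ℝ 2 ψtil z)
    (hw : ∀ z : ℂ, z ≠ 0 → ContDiffAt ℝ 1 wtil z) :
    let T : ℝ → ℝ → ℂ := fun β φ =>
      (Real.exp (a β φ) : ℂ) * Complex.exp (((β + φ : ℝ) : ℂ) * Complex.I)
    (∀ β : ℝ, 0 < β → ∀ φ : ℝ,
      deriv (fun b => ψtil (T b φ)) β = -μ * Real.exp (2 * a β φ)) →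
    (∀ β : ℝ, 0 < β → ∀ φ : ℝ,
      0 < deriv (fun p => ψtil (T β p)) φ - deriv (fun b => ψtil (T b φ)) β) →
    (∀ β : ℝ, 0 < β → ∀ φ : ℝ,
      -(wtil (T β φ)) +
        dotR (gradPerp ψtil (T β φ) - μ • T β φ) (grad2 wtil (T β φ)) = 0) →
    ∃ Ω : ℝ → ℝ, ∀ β : ℝ, 0 < β → ∀ φ : ℝ,
      wtil (T β φ) =
        (deriv (fun p => ψtil (T β p)) φ - deriv (fun b => ψtil (T b φ)) β) ^
            (-(1 / (2 * μ))) * Ω φ := by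
  intro T hψβ hGpos hEuler
  set A : ℝ × ℝ → ℝ := fun p => a p.1 p.2 with hAdef
  set Tm : ℝ × ℝ → ℂ := fun p =>
    (Real.exp (A p) : ℂ) * Complex.exp (((p.1 + p.2 : ℝ) : ℂ) * Complex.I) with hTmdef
  set dA : ℝ × ℝ → (ℝ × ℝ →L[ℝ] ℝ) := fun p => fderiv ℝ A p with hdAdef
  set ι : ℝ × ℝ →L[ℝ] ℝ :=
    ContinuousLinearMap.fst ℝ ℝ ℝ + ContinuousLinearMap.snd ℝ ℝ ℝ with hιdef
  set LT : ℝ × ℝ → (ℝ × ℝ →L[ℝ] ℂ) := fun p =>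
    (dA p).smulRight (Tm p) + ι.smulRight (Tm p * Complex.I) with hLTdef
  have hTT : ∀ b f : ℝ, T b f = Tm (b, f) := fun _ _ => rfl
  -- T never vanishes
  have hTne : ∀ p : ℝ × ℝ, Tm p ≠ 0 := by
    intro p
    exact mul_ne_zero (Complex.ofReal_ne_zero.2 (Real.exp_ne_zero _)) (Complex.exp_ne_zero _)
  -- |T|² = e^{2a}
  have hTsq : ∀ p : ℝ × ℝ, (Tm p).re ^ 2 + (Tm p).im ^ 2 = Real.exp (2 * A p) := by
    intro p
    have : (Tm p).re ^ 2 + (Tm p).im ^ 2 = Complex.normSq (Tm p) := by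
      simp [Complex.normSq_apply]; ring
    rw [this, hTmdef]
    simp only [Complex.normSq_eq_norm_sq, norm_mul, Complex.norm_real, Real.norm_eq_abs,
      Complex.norm_exp_ofReal_mul_I, abs_of_pos (Real.exp_pos _), mul_one]
    rw [two_mul, Real.exp_add]
    ring
  -- second factor is smooth
  have hexp2 : ContDiff ℝ 2 (fun q : ℝ × ℝ => Complex.exp (((q.1 + q.2 : ℝ) : ℂ) * Complex.I)) := by
    have hinner : ContDiff ℝ 2 (fun q : ℝ × ℝ => ((q.1 + q.2 : ℝ) : ℂ) * Complex.I) :=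
      (Complex.ofRealCLM.contDiff.comp (contDiff_fst.add contDiff_snd)).mul contDiff_const
    exact (Complex.contDiff_exp (𝕜 := ℝ)).comp hinner
  -- Tm is C² on U
  have hTm2 : ∀ β : ℝ, 0 < β → ∀ φ : ℝ, ContDiffAt ℝ 2 Tm (β, φ) := by
    intro β hβ φ
    exact ((Complex.ofRealCLM.contDiff.comp Real.contDiff_exp).contDiffAt.comp _
      (ha β hβ φ)).mul hexp2.contDiffAt
  -- Tm has explicit derivative
  have hTfd : ∀ β : ℝ, 0 < β → ∀ φ : ℝ, HasFDerivAt Tm (LT (β, φ)) (β, φ) := by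
    intro β hβ φ
    have hA1 : HasFDerivAt A (dA (β, φ)) (β, φ) :=
      ((ha β hβ φ).differentiableAt (by norm_num)).hasFDerivAt
    have h1 : HasFDerivAt (fun q => ((Real.exp (A q)) : ℂ))
        (Complex.ofRealCLM.comp ((Real.exp (A (β, φ))) • dA (β, φ))) (β, φ) :=
      Complex.ofRealCLM.hasFDerivAt.comp (β, φ) hA1.exp
    have hιeq : (fun q : ℝ × ℝ => ((q.1 + q.2 : ℝ) : ℂ) * Complex.I)
        = fun q => (ι.smulRight Complex.I) q := by
      funext q; simp [hιdef, Complex.real_smul]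
    have hι1 : HasFDerivAt (fun q : ℝ × ℝ => ((q.1 + q.2 : ℝ) : ℂ) * Complex.I)
        (ι.smulRight Complex.I) (β, φ) := by
      rw [hιeq]; exact (ι.smulRight Complex.I).hasFDerivAt
    have hce : HasFDerivAt Complex.exp
        (((1 : ℂ →L[ℂ] ℂ).smulRight
          (Complex.exp (((β + φ : ℝ) : ℂ) * Complex.I))).restrictScalars ℝ)
        (((β + φ : ℝ) : ℂ) * Complex.I) :=
      ((Complex.hasDerivAt_exp _).hasFDerivAt).restrictScalars ℝ
    have h2 : HasFDerivAt (fun q : ℝ × ℝ => Complex.exp (((q.1 + q.2 : ℝ) : ℂ) * Complex.I))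
        ((((1 : ℂ →L[ℂ] ℂ).smulRight
          (Complex.exp (((β + φ : ℝ) : ℂ) * Complex.I))).restrictScalars ℝ).comp
          (ι.smulRight Complex.I)) (β, φ) := hce.comp (β, φ) hι1
    have := h1.mul h2
    refine HasFDerivAt.congr_fderiv this ?_
    apply ContinuousLinearMap.ext
    intro v
    simp [hLTdef, hTmdef, hιdef, Complex.real_smul, smul_eq_mul]
    ring
  -- applied form of LT
  have hLTap : ∀ p : ℝ × ℝ, ∀ v : ℝ × ℝ,
      LT p v = ((dA p v : ℂ) + ((v.1 + v.2 : ℝ) : ℂ) * Complex.I) * Tm p := by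
    intro p v
    simp [hLTdef, hιdef, Complex.real_smul]
    ring
  -- Ψ and its derivative facts
  set Ψ : ℝ × ℝ → ℝ := fun p => ψtil (Tm p) with hΨdef
  have hΨfd : ∀ β : ℝ, 0 < β → ∀ φ : ℝ,
      HasFDerivAt Ψ ((fderiv ℝ ψtil (Tm (β, φ))).comp (LT (β, φ))) (β, φ) := by
    intro β hβ φ
    exact (((hψ _ (hTne (β, φ))).differentiableAt (by norm_num)).hasFDerivAt).comp (β, φ)
      (hTfd β hβ φ)
  have hΨ2 : ∀ β : ℝ, 0 < β → ∀ φ : ℝ, ContDiffAt ℝ 2 Ψ (β, φ) := by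
    intro β hβ φ
    exact (hψ _ (hTne (β, φ))).comp _ (hTm2 β hβ φ)
  have hcurveβ : ∀ β φ : ℝ, HasDerivAt (fun b : ℝ => ((b, φ) : ℝ × ℝ)) (1, 0) β :=
    fun β φ => (hasDerivAt_id β).prodMk (hasDerivAt_const β φ)
  have hcurveφ : ∀ β φ : ℝ, HasDerivAt (fun p' : ℝ => ((β, p') : ℝ × ℝ)) (0, 1) φ :=
    fun β φ => (hasDerivAt_const φ β).prodMk (hasDerivAt_id φ)
  have hderβ : ∀ β : ℝ, 0 < β → ∀ φ : ℝ,
      HasDerivAt (fun b => ψtil (T b φ)) (fderiv ℝ Ψ (β, φ) (1, 0)) β := by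
    intro β hβ φ
    have h := (hΨfd β hβ φ).comp_hasDerivAt β (hcurveβ β φ)
    rw [(hΨfd β hβ φ).fderiv]
    exact h
  have hderφ : ∀ β : ℝ, 0 < β → ∀ φ : ℝ,
      HasDerivAt (fun p' => ψtil (T β p')) (fderiv ℝ Ψ (β, φ) (0, 1)) φ := by
    intro β hβ φ
    have h := (hΨfd β hβ φ).comp_hasDerivAt φ (hcurveφ β φ)
    rw [(hΨfd β hβ φ).fderiv]
    exact h
  have hβval : ∀ β : ℝ, 0 < β → ∀ φ : ℝ,
      fderiv ℝ Ψ (β, φ) (1, 0) = -μ * Real.exp (2 * A (β, φ)) := by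
    intro β hβ φ
    rw [← (hderβ β hβ φ).deriv]
    exact hψβ β hβ φ
  have hm11 : ((-1, 1) : ℝ × ℝ) = (0, 1) - (1, 0) := by norm_num
  have hGrepr : ∀ β : ℝ, 0 < β → ∀ φ : ℝ,
      deriv (fun p' => ψtil (T β p')) φ - deriv (fun b => ψtil (T b φ)) β
        = fderiv ℝ Ψ (β, φ) (-1, 1) := by
    intro β hβ φ
    rw [(hderφ β hβ φ).deriv, (hderβ β hβ φ).deriv, hm11, map_sub]
  -- w along T, derivative in β
  have hWfd : ∀ β : ℝ, 0 < β → ∀ φ : ℝ,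
      HasDerivAt (fun b => wtil (T b φ)) (fderiv ℝ wtil (Tm (β, φ)) (LT (β, φ) (1, 0))) β := by
    intro β hβ φ
    have hwf : HasFDerivAt (fun p => wtil (Tm p))
        ((fderiv ℝ wtil (Tm (β, φ))).comp (LT (β, φ))) (β, φ) :=
      (((hw _ (hTne (β, φ))).differentiableAt one_ne_zero).hasFDerivAt).comp (β, φ) (hTfd β hβ φ)
    have h := hwf.comp_hasDerivAt β (hcurveβ β φ)
    rw [ContinuousLinearMap.comp_apply] at h
    exact h
  -- the Euler equation in adapted coordinates
  have hWval : ∀ β : ℝ, 0 < β → ∀ φ : ℝ,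
      fderiv ℝ wtil (Tm (β, φ)) (LT (β, φ) (1, 0))
        = wtil (T β φ) * ((dA (β, φ) (0, 1) - dA (β, φ) (1, 0)) * Real.exp (2 * a β φ))
          / (deriv (fun p' => ψtil (T β p')) φ - deriv (fun b => ψtil (T b φ)) β) := by
    intro β hβ φ
    set z : ℂ := Tm (β, φ) with hzdef
    set c₁ : ℝ := dA (β, φ) (1, 0) with hc1def
    set c₂ : ℝ := dA (β, φ) (0, 1) with hc2def
    set E : ℝ := Real.exp (2 * a β φ) with hEdef
    set q : ℝ := deriv (fun p' => ψtil (T β p')) φ with hqdef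
    have hE : E = z.re ^ 2 + z.im ^ 2 := (hTsq (β, φ)).symm
    have hEpos : 0 < E := Real.exp_pos _
    have hc : c₂ - c₁ ≠ 0 := haφβ β hβ φ
    have hu1 : ((c₁ : ℂ) * z + Complex.I * z) = LT (β, φ) (1, 0) := by
      rw [hLTap]; push_cast; ring
    have hu2 : ((c₂ : ℂ) * z + Complex.I * z) = LT (β, φ) (0, 1) := by
      rw [hLTap]; push_cast; ring
    have h1 : dotR (grad2 ψtil z) ((c₁ : ℂ) * z + Complex.I * z) = -μ * E := by
      rw [dot_grad, hu1]
      have : fderiv ℝ ψtil z (LT (β, φ) (1, 0)) = fderiv ℝ Ψ (β, φ) (1, 0) := by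
        rw [(hΨfd β hβ φ).fderiv]; rfl
      rw [this, hβval β hβ φ]
    have h2 : dotR (grad2 ψtil z) ((c₂ : ℂ) * z + Complex.I * z) = q := by
      rw [dot_grad, hu2]
      have : fderiv ℝ ψtil z (LT (β, φ) (0, 1)) = fderiv ℝ Ψ (β, φ) (0, 1) := by
        rw [(hΨfd β hβ φ).fderiv]; rfl
      rw [this, hqdef, (hderφ β hβ φ).deriv]
    set s : ℝ := (q + μ * E) / ((c₂ - c₁) * E) with hsdef
    have hX := keyX (grad2 ψtil z) z c₁ c₂ μ q E s hE (ne_of_gt hEpos) h1 h2 hc hsdef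
    have hEu := hEuler β hβ φ
    rw [hTT β φ] at hEu
    rw [gradPerp_eq] at hEu
    rw [hX] at hEu
    rw [dotR_smul, dotR_comm, dot_grad, hu1] at hEu
    -- positivity of G = q + μE
    have hGpos' : 0 < q + μ * E := by
      have h0 := hGpos β hβ φ
      rw [hψβ β hβ φ] at h0
      rw [hqdef]
      linarith
    have hβder : deriv (fun b => ψtil (T b φ)) β = -μ * E := hψβ β hβ φ
    rw [hβder, hTT β φ]
    have hG : q - (-μ * E) = q + μ * E := by ring
    rw [hG]
    -- hEu : -(wtil z) + s * fderiv wtil z (LT (1,0)) = 0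
    have hW : wtil (Tm (β, φ)) = s * fderiv ℝ wtil z (LT (β, φ) (1, 0)) := by linarith
    rw [hW, hsdef]
    field_simp
  -- second derivative of Ψ: symmetry gives the β-derivative of G
  have hGd : ∀ φ β : ℝ, 0 < β →
      HasDerivAt (fun b => fderiv ℝ Ψ (b, φ) (-1, 1))
        (-2 * μ * Real.exp (2 * a β φ) * (dA (β, φ) (0, 1) - dA (β, φ) (1, 0))) β := by
    intro φ β hβ
    have hΨ2' := hΨ2 β hβ φ
    have hfd1 : ContDiffAt ℝ 1 (fderiv ℝ Ψ) (β, φ) := hΨ2'.fderiv_right (by norm_num)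
    have hDF : DifferentiableAt ℝ (fderiv ℝ Ψ) (β, φ) := hfd1.differentiableAt one_ne_zero
    set D2 : ℝ × ℝ →L[ℝ] (ℝ × ℝ →L[ℝ] ℝ) := fderiv ℝ (fderiv ℝ Ψ) (β, φ) with hD2def
    have happ : ∀ v : ℝ × ℝ, HasFDerivAt (fun x => fderiv ℝ Ψ x v)
        ((ContinuousLinearMap.apply ℝ ℝ v).comp D2) (β, φ) := fun v =>
      ((ContinuousLinearMap.apply ℝ ℝ v).hasFDerivAt).comp (β, φ) hDF.hasFDerivAt
    have heq : (fun x : ℝ × ℝ => fderiv ℝ Ψ x (1, 0)) =ᶠ[nhds (β, φ)]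
        (fun x : ℝ × ℝ => -μ * Real.exp (2 * A x)) := by
      have hop : IsOpen {x : ℝ × ℝ | 0 < x.1} := isOpen_lt continuous_const continuous_fst
      filter_upwards [hop.mem_nhds (by exact hβ)] with x hx
      have := hβval x.1 hx x.2
      simpa using this
    have hA1 : HasFDerivAt A (dA (β, φ)) (β, φ) :=
      ((ha β hβ φ).differentiableAt (by norm_num)).hasFDerivAt
    have hRd : HasFDerivAt (fun x : ℝ × ℝ => -μ * Real.exp (2 * A x))
        ((-2 * μ * Real.exp (2 * A (β, φ))) • dA (β, φ)) (β, φ) := by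
      have h2A : HasFDerivAt (fun x : ℝ × ℝ => 2 * A x) ((2:ℝ) • dA (β, φ)) (β, φ) :=
        hA1.const_mul 2
      have hexp := h2A.exp
      have hfin := hexp.const_mul (-μ)
      have hclm : (-2 * μ * Real.exp (2 * A (β, φ))) • dA (β, φ)
          = (-μ : ℝ) • Real.exp (2 * A (β, φ)) • (2:ℝ) • dA (β, φ) := by
        rw [smul_smul, smul_smul]
        ring_nf
      rw [hclm]
      exact hfin
    have hlhs : HasFDerivAt (fun x : ℝ × ℝ => fderiv ℝ Ψ x (1, 0))
        ((-2 * μ * Real.exp (2 * A (β, φ))) • dA (β, φ)) (β, φ) :=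
      hRd.congr_of_eventuallyEq heq
    have huniq : (ContinuousLinearMap.apply ℝ ℝ ((1:ℝ), (0:ℝ))).comp D2
        = (-2 * μ * Real.exp (2 * A (β, φ))) • dA (β, φ) := (happ (1, 0)).unique hlhs
    have hsym := hΨ2'.isSymmSndFDerivAt (by simp [minSmoothness_of_isRCLikeNormedField])
    have hsval : D2 (1, 0) (-1, 1)
        = -2 * μ * Real.exp (2 * a β φ) * (dA (β, φ) (0, 1) - dA (β, φ) (1, 0)) := by
      have h1 : D2 (1, 0) (-1, 1) = D2 (-1, 1) (1, 0) := hsym _ _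
      have h2 : D2 (-1, 1) (1, 0)
          = ((ContinuousLinearMap.apply ℝ ℝ ((1:ℝ), (0:ℝ))).comp D2) (-1, 1) := rfl
      rw [h1, h2, huniq, hm11]
      simp only [map_sub, ContinuousLinearMap.smul_apply, smul_eq_mul, hAdef]
      ring
    have h := (happ (-1, 1)).comp_hasDerivAt β (hcurveβ β φ)
    have hval : ((ContinuousLinearMap.apply ℝ ℝ ((-1:ℝ), (1:ℝ))).comp D2) (1, 0)
        = D2 (1, 0) (-1, 1) := rfl
    rw [hval, hsval] at h
    exact h
  -- assembly
  refine ⟨fun φ => (deriv (fun p' => ψtil (T 1 p')) φ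
      - deriv (fun b' => ψtil (T b' φ)) 1) ^ (1 / (2 * μ)) * wtil (T 1 φ), ?_⟩
  intro β hβ φ
  have hF0 : ∀ x ∈ Ioi (0:ℝ), HasDerivAt (fun b =>
      (deriv (fun p' => ψtil (T b p')) φ - deriv (fun b' => ψtil (T b' φ)) b) ^ (1 / (2 * μ))
        * wtil (T b φ)) 0 x := by
    intro x hx
    have hx0 : 0 < x := hx
    have hev : (fun b => deriv (fun p' => ψtil (T b p')) φ
        - deriv (fun b' => ψtil (T b' φ)) b)
        =ᶠ[nhds x] (fun b => fderiv ℝ Ψ (b, φ) (-1, 1)) := by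
      filter_upwards [eventually_gt_nhds hx0] with b hb
      exact hGrepr b hb φ
    have hG' : HasDerivAt (fun b => deriv (fun p' => ψtil (T b p')) φ
        - deriv (fun b' => ψtil (T b' φ)) b)
        (-2 * μ * Real.exp (2 * a x φ) * (dA (x, φ) (0, 1) - dA (x, φ) (1, 0))) x :=
      (hGd φ x hx0).congr_of_eventuallyEq hev
    have hGval : 0 < deriv (fun p' => ψtil (T x p')) φ
        - deriv (fun b' => ψtil (T b' φ)) x := hGpos x hx0 φ
    have hW' := hWfd x hx0 φ
    rw [hWval x hx0 φ] at hW'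
    have hcomb := (hG'.rpow_const (p := 1/(2*μ)) (Or.inl (ne_of_gt hGval))).mul hW'
    refine HasDerivAt.congr_deriv hcomb ?_
    symm
    have hrm1 : (deriv (fun p' => ψtil (T x p')) φ - deriv (fun b' => ψtil (T b' φ)) x)
          ^ (1/(2*μ) - 1)
        = (deriv (fun p' => ψtil (T x p')) φ - deriv (fun b' => ψtil (T b' φ)) x) ^ (1/(2*μ))
          / (deriv (fun p' => ψtil (T x p')) φ - deriv (fun b' => ψtil (T b' φ)) x) := by
      rw [Real.rpow_sub hGval, Real.rpow_one]
    rw [hrm1]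
    field_simp
    ring
  have hconst := const_of_deriv_zero _ hF0 β hβ
  have hGpos' : 0 < deriv (fun p' => ψtil (T β p')) φ
      - deriv (fun b' => ψtil (T b' φ)) β := hGpos β hβ φ
  beta_reduce
  rw [Real.rpow_neg hGpos'.le, ← hconst]
  rw [inv_mul_cancel_left₀ (ne_of_gt (Real.rpow_pos_of_pos hGpos' _))]
end
end

section
/- Injectivity of D^{(n,s)} on bounded continuous functions: let n ∈ ℤ and s ∈ ℝ with s ≠ 0. If f : [0,∞) → ℂ is continuous, bounded, differentiable on (0,∞), and satisfies β·(f′(β) − i·n·f(β)) − s·f(β) = 0 for all β > 0, then f(β) = 0 for all β ≥ 0. -/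
open Set Filter Topology

/-- **Injectivity of `D^{(n,s)}` on bounded continuous functions.**
If `f : [0,∞) → ℂ` is continuous, bounded, differentiable on `(0,∞)` and satisfies
`β (f'(β) - i n f(β)) - s f(β) = 0` for all `β > 0` with `s ≠ 0`, then `f ≡ 0` on `[0,∞)`. -/
theorem stmt9 (n : ℤ) (s : ℝ) (hs : s ≠ 0) (f : ℝ → ℂ)
    (hcont : ContinuousOn f (Set.Ici 0))
    (hbd : ∃ M : ℝ, ∀ β : ℝ, 0 ≤ β → ‖f β‖ ≤ M)
    (hdiff : ∀ β : ℝ, 0 < β → DifferentiableAt ℝ f β)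
    (hode : ∀ β : ℝ, 0 < β →
      (β : ℂ) * (deriv f β - Complex.I * (n : ℂ) * f β) - (s : ℂ) * f β = 0) :
    ∀ β : ℝ, 0 ≤ β → f β = 0 := by
  obtain ⟨M, hM⟩ := hbd
  set e : ℝ → ℂ := fun β => Complex.exp (-(Complex.I * (n : ℂ)) * (β : ℂ)) with he
  set r : ℝ → ℝ := fun β => β ^ (-s) with hr
  set g : ℝ → ℂ := fun β => f β * e β * (r β : ℂ) with hg
  -- derivative of g is zero on (0,∞)
  have hgd : ∀ β : ℝ, 0 < β → HasDerivAt g 0 β := by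
    intro β hβ
    have hf' : HasDerivAt f (deriv f β) β := (hdiff β hβ).hasDerivAt
    have hid : HasDerivAt (fun x : ℝ => (x : ℂ)) 1 β := by
      simpa using (hasDerivAt_id β).ofReal_comp
    have he' : HasDerivAt e (-(Complex.I * (n : ℂ)) * e β) β := by
      have : HasDerivAt (fun x : ℝ => -(Complex.I * (n : ℂ)) * (x : ℂ))
          (-(Complex.I * (n : ℂ))) β := by simpa using hid.const_mul (-(Complex.I * (n : ℂ)))
      simpa [he, mul_comm] using this.cexp
    have hr' : HasDerivAt (fun x : ℝ => Complex.ofReal (x ^ (-s))) ((( -s * β ^ (-s - 1) : ℝ)) : ℂ) β :=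
      HasDerivAt.ofReal_comp (Real.hasDerivAt_rpow_const (Or.inl hβ.ne'))
    have := ((hf'.mul he').mul hr')
    convert this using 1
    · rfl
    · rfl
    have hode' := hode β hβ
    have hβs : (β : ℝ) ^ (-s) = β ^ (-s - 1) * β := by
      rw [← Real.rpow_add_one hβ.ne']; ring_nf
    have hkey : (deriv f β - Complex.I * (n : ℂ) * f β) * (β : ℂ) = (s : ℂ) * f β := by
      have := hode β hβ
      linear_combination this
    push_cast [hr, hβs, Pi.mul_apply]
    linear_combination (-(e β) * ((β:ℝ) ^ (-s - 1) : ℝ)) * hkey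
  -- g is constant on (0,∞)
  have hconst : ∀ x ∈ Ioi (0:ℝ), ∀ y ∈ Ioi (0:ℝ), g x = g y := by
    intro x hx y hy
    refine (convex_Ioi (0:ℝ)).is_const_of_fderivWithin_eq_zero
      (fun z hz => ((hgd z hz).differentiableAt).differentiableWithinAt) ?_ hx hy
    intro z hz
    rw [fderivWithin_of_isOpen isOpen_Ioi hz, (hgd z hz).hasFDerivAt.fderiv]
    ext
    simp
  set C : ℂ := g 1 with hC
  have habs : ∀ β : ℝ, 0 < β → ‖f β‖ * β ^ (-s) = ‖C‖ := by
    intro β hβ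
    have := hconst β hβ 1 (by norm_num)
    rw [hC, ← this, hg]
    simp only [he, hr, norm_mul, Complex.norm_exp, Complex.norm_real, Real.norm_eq_abs]
    have : (-(Complex.I * (n : ℂ)) * (β : ℂ)).re = 0 := by simp
    rw [this, Real.exp_zero]
    rw [abs_of_nonneg (Real.rpow_nonneg hβ.le _)]
    ring
  -- C = 0
  have hC0 : C = 0 := by
    rcases lt_or_gt_of_ne hs with hneg | hpos
    · -- s < 0 : β^{-s} → 0 as β → 0⁺, and |f β| bounded near 0
      have h1 : Tendsto (fun β : ℝ => ‖f β‖ * β ^ (-s)) (𝓝[>] 0) (𝓝 0) := by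
        have hfa : Tendsto (fun β : ℝ => ‖f β‖) (𝓝[>] 0)
            (𝓝 (‖f 0‖)) := by
          have : ContinuousWithinAt f (Ici 0) 0 := hcont 0 (by simp)
          exact (continuous_norm.continuousAt.comp_continuousWithinAt this).tendsto.mono_left
            (nhdsWithin_mono 0 Ioi_subset_Ici_self)
        have hra : Tendsto (fun β : ℝ => β ^ (-s)) (𝓝[>] 0) (𝓝 0) := by
          have hc : ContinuousAt (fun β : ℝ => β ^ (-s)) 0 :=
            Real.continuousAt_rpow_const 0 (-s) (Or.inr (by linarith))
          have := hc.tendsto.mono_left (nhdsWithin_le_nhds (s := Ioi (0:ℝ)))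
          simpa [Real.zero_rpow (by linarith : -s ≠ 0)] using this
        simpa using hfa.mul hra
      have h2 : Tendsto (fun _ : ℝ => ‖C‖) (𝓝[>] (0:ℝ)) (𝓝 (‖C‖)) :=
        tendsto_const_nhds
      have heq : (fun β : ℝ => ‖f β‖ * β ^ (-s)) =ᶠ[𝓝[>] (0:ℝ)]
          (fun _ => ‖C‖) := by
        filter_upwards [self_mem_nhdsWithin] with β hβ using habs β hβ
      have := tendsto_nhds_unique (h1.congr' heq) h2
      simpa [norm_eq_zero] using this.symm
    · -- s > 0 : |C| ≤ M β^{-s} → 0 as β → ∞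
      have hle : ∀ᶠ β : ℝ in atTop, ‖C‖ ≤ M * β ^ (-s) := by
        filter_upwards [eventually_gt_atTop (0:ℝ)] with β hβ
        rw [← habs β hβ]
        exact mul_le_mul_of_nonneg_right (hM β hβ.le) (Real.rpow_nonneg hβ.le _)
      have hlim : Tendsto (fun β : ℝ => M * β ^ (-s)) atTop (𝓝 0) := by
        simpa using (tendsto_rpow_neg_atTop hpos).const_mul M
      have : ‖C‖ ≤ 0 := ge_of_tendsto hlim hle
      simpa [norm_eq_zero] using le_antisymm this (norm_nonneg C)
  -- f = 0 on (0,∞)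
  have hfz : ∀ β : ℝ, 0 < β → f β = 0 := by
    intro β hβ
    have h1 := habs β hβ
    rw [hC0] at h1
    simp only [norm_zero] at h1
    have hrp : (0:ℝ) < β ^ (-s) := Real.rpow_pos_of_pos hβ _
    have : ‖f β‖ = 0 := by
      rcases mul_eq_zero.mp h1 with h | h
      · exact h
      · exact absurd h hrp.ne'
    simpa [norm_eq_zero] using this
  -- conclude at 0 by continuity
  intro β hβ
  rcases eq_or_lt_of_le hβ with h0 | h0
  · have hct : Tendsto f (𝓝[>] (0:ℝ)) (𝓝 (f 0)) :=
      ((hcont 0 (by simp)).tendsto).mono_left (nhdsWithin_mono 0 Ioi_subset_Ici_self)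
    have hz : Tendsto f (𝓝[>] (0:ℝ)) (𝓝 0) := by
      have heq : f =ᶠ[𝓝[>] (0:ℝ)] (fun _ => (0:ℂ)) := by
        filter_upwards [self_mem_nhdsWithin] with x hx using hfz x hx
      exact (tendsto_congr' heq).mpr tendsto_const_nhds
    rw [← h0]
    exact tendsto_nhds_unique hct hz
  · exact hfz β h0
end

section
/- Bounded right inverse of D^{(n,s)} on C_b: let n ∈ ℤ, s ∈ ℝ with s ≠ 0, and f ∈ C_b. Then there exists a unique u ∈ C_b, differentiable on (0,∞), with (D^{(n,s)}u)(β) = f(β) for all β > 0; it is given by u(β) = −e^{inβ}∫_1^∞ f(βy)·e^{−inβy}·y^{−s−1} dy if s > 0, and u(β) = e^{inβ}∫_0^1 f(βy)·e^{−inβy}·y^{−s−1} dy if s < 0, and it satisfies ‖u‖_{C_b} ≤ ‖f‖_{C_b}/|s|. -/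
open Set MeasureTheory

noncomputable section


def auxF (n : ℤ) (f : ℝ → ℂ) : ℝ → ℂ := fun t => f t * Complex.exp (-(Complex.I * (n : ℂ) * (t : ℂ)))
def auxh (n : ℤ) (s : ℝ) (f : ℝ → ℂ) : ℝ → ℂ := fun t => auxF n f t * ((t ^ (-s - 1) : ℝ) : ℂ)

theorem auxF_abs (n : ℤ) (f : ℝ → ℂ) (t : ℝ) : ‖auxF n f t‖ = ‖f t‖ := by
  simp [auxF, Complex.norm_exp]

theorem auxF_contOn (n : ℤ) {f : ℝ → ℂ} (hfc : ContinuousOn f (Set.Ici 0)) :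
    ContinuousOn (auxF n f) (Set.Ici 0) := by
  exact hfc.mul ((Complex.continuous_exp.comp (by continuity)).continuousOn)

theorem auxF_contAt (n : ℤ) {f : ℝ → ℂ} (hfc : ContinuousOn f (Set.Ici 0)) {t : ℝ} (ht : 0 < t) :
    ContinuousAt (auxF n f) t := by
  have h1 : ContinuousAt f t :=
    hfc.continuousAt (Filter.mem_of_superset (Ioi_mem_nhds ht) Ioi_subset_Ici_self)
  exact h1.mul (Complex.continuous_exp.continuousAt.comp (by fun_prop))

theorem auxh_contOn (n : ℤ) (s : ℝ) {f : ℝ → ℂ} (hfc : ContinuousOn f (Set.Ici 0)) :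
    ContinuousOn (auxh n s f) (Set.Ioi 0) := by
  apply ContinuousOn.mul ((auxF_contOn n hfc).mono (Ioi_subset_Ici_self))
  apply Complex.continuous_ofReal.comp_continuousOn
  intro t ht
  exact (Real.continuousAt_rpow_const t _ (Or.inl (ne_of_gt ht))).continuousWithinAt

theorem auxh_contAt (n : ℤ) (s : ℝ) {f : ℝ → ℂ} (hfc : ContinuousOn f (Set.Ici 0)) {t : ℝ}
    (ht : 0 < t) : ContinuousAt (auxh n s f) t :=
  (auxF_contAt n hfc ht).mul
    (Complex.continuous_ofReal.continuousAt.comp (Real.continuousAt_rpow_const t _ (Or.inl (ne_of_gt ht))))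

theorem auxh_norm_le (n : ℤ) (s : ℝ) {f : ℝ → ℂ} {M : ℝ}
    (hfb : ∀ β : ℝ, 0 ≤ β → ‖f β‖ ≤ M) {t : ℝ} (ht : 0 < t) :
    ‖auxh n s f t‖ ≤ M * t ^ (-s - 1) := by
  rw [auxh, norm_mul, auxF_abs,
    Complex.norm_real, Real.norm_eq_abs, abs_of_nonneg (Real.rpow_nonneg ht.le _)]
  exact mul_le_mul_of_nonneg_right (hfb _ ht.le) (Real.rpow_nonneg ht.le _)

theorem integrand_contOn (n : ℤ) (s : ℝ) {f : ℝ → ℂ} (hfc : ContinuousOn f (Set.Ici 0))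
    {β : ℝ} (hβ : 0 ≤ β) :
    ContinuousOn (fun y : ℝ => auxF n f (β * y) * ((y ^ (-s - 1) : ℝ) : ℂ)) (Set.Ioi 1) := by
  have h1 : ContinuousOn (fun y : ℝ => auxF n f (β * y)) (Set.Ioi 1) := by
    apply ((auxF_contOn n hfc).comp (continuous_const.mul continuous_id).continuousOn)
    intro y hy
    exact mul_nonneg hβ (le_trans zero_le_one (le_of_lt hy))
  apply h1.mul
  apply Complex.continuous_ofReal.comp_continuousOn
  intro y hy
  exact (Real.continuousAt_rpow_const y _
    (Or.inl (ne_of_gt (lt_trans zero_lt_one hy)))).continuousWithinAt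

theorem bound_int {s : ℝ} (hs : 0 < s) (M : ℝ) :
    IntegrableOn (fun y : ℝ => M * y ^ (-s - 1)) (Set.Ioi (1 : ℝ)) :=
  (integrableOn_Ioi_rpow_of_lt (by linarith) zero_lt_one).const_mul M

theorem integrand_int (n : ℤ) {s : ℝ} (hs : 0 < s) {f : ℝ → ℂ} (hfc : ContinuousOn f (Set.Ici 0))
    {M : ℝ} (hfb : ∀ β : ℝ, 0 ≤ β → ‖f β‖ ≤ M) {β : ℝ} (hβ : 0 ≤ β) :
    IntegrableOn (fun y : ℝ => auxF n f (β * y) * ((y ^ (-s - 1) : ℝ) : ℂ)) (Set.Ioi 1) := by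
  apply Integrable.mono' (bound_int hs M)
    ((integrand_contOn n s hfc hβ).aestronglyMeasurable measurableSet_Ioi)
  filter_upwards [ae_restrict_mem measurableSet_Ioi] with y hy
  have hy0 : 0 < y := lt_trans zero_lt_one hy
  rw [norm_mul, auxF_abs,
    Complex.norm_real, Real.norm_eq_abs, abs_of_nonneg (Real.rpow_nonneg hy0.le _)]
  exact mul_le_mul_of_nonneg_right (hfb _ (mul_nonneg hβ hy0.le)) (Real.rpow_nonneg hy0.le _)

theorem auxh_int (n : ℤ) {s : ℝ} (hs : 0 < s) {f : ℝ → ℂ} (hfc : ContinuousOn f (Set.Ici 0))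
    {M : ℝ} (hfb : ∀ β : ℝ, 0 ≤ β → ‖f β‖ ≤ M) {c : ℝ} (hc : 0 < c) :
    IntegrableOn (auxh n s f) (Set.Ioi c) := by
  apply Integrable.mono'
    ((integrableOn_Ioi_rpow_of_lt (show -s-1 < -1 by linarith) hc).const_mul M)
  · exact (((auxh_contOn n s hfc).mono (Ioi_subset_Ioi hc.le)).aestronglyMeasurable measurableSet_Ioi)
  · filter_upwards [ae_restrict_mem measurableSet_Ioi] with y hy
    exact auxh_norm_le n s hfb (lt_trans hc hy)

-- interval integrability of auxh on positive intervals
theorem auxh_intInt (n : ℤ) (s : ℝ) {f : ℝ → ℂ} (hfc : ContinuousOn f (Set.Ici 0))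
    {a b : ℝ} (ha : 0 < a) (hb : 0 < b) :
    IntervalIntegrable (auxh n s f) volume a b := by
  apply ContinuousOn.intervalIntegrable
  apply (auxh_contOn n s hfc).mono
  intro x hx
  rcases le_total a b with h | h
  · rw [uIcc_of_le h] at hx; exact lt_of_lt_of_le ha hx.1
  · rw [uIcc_of_ge h] at hx; exact lt_of_lt_of_le hb hx.1

-- A b = A 1 - ∫ 1..b
theorem auxA_split (n : ℤ) {s : ℝ} (hs : 0 < s) {f : ℝ → ℂ} (hfc : ContinuousOn f (Set.Ici 0))
    {M : ℝ} (hfb : ∀ β : ℝ, 0 ≤ β → ‖f β‖ ≤ M) {b : ℝ} (hb : 0 < b) :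
    (∫ t in Ioi b, auxh n s f t) =
      (∫ t in Ioi (1 : ℝ), auxh n s f t) - ∫ t in (1:ℝ)..b, auxh n s f t := by
  have key : ∀ x y : ℝ, 0 < x → x ≤ y →
      (∫ t in Ioi x, auxh n s f t) = (∫ t in x..y, auxh n s f t) + ∫ t in Ioi y, auxh n s f t := by
    intro x y hx hxy
    rw [intervalIntegral.integral_of_le hxy]
    rw [← setIntegral_union (Ioc_disjoint_Ioi le_rfl) measurableSet_Ioi
      ((auxh_int n hs hfc hfb hx).mono_set Ioc_subset_Ioi_self)
      (auxh_int n hs hfc hfb (lt_of_lt_of_le hx hxy)), Ioc_union_Ioi_eq_Ioi hxy]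
  rcases le_total 1 b with h | h
  · rw [key 1 b zero_lt_one h]; ring
  · rw [key b 1 hb h, intervalIntegral.integral_symm]; ring

-- derivative of A
theorem auxA_hasDeriv (n : ℤ) {s : ℝ} (hs : 0 < s) {f : ℝ → ℂ} (hfc : ContinuousOn f (Set.Ici 0))
    {M : ℝ} (hfb : ∀ β : ℝ, 0 ≤ β → ‖f β‖ ≤ M) {b : ℝ} (hb : 0 < b) :
    HasDerivAt (fun x => ∫ t in Ioi x, auxh n s f t) (-(auxh n s f b)) b := by
  have h1 : HasDerivAt (fun x => (∫ t in Ioi (1:ℝ), auxh n s f t) - ∫ t in (1:ℝ)..x, auxh n s f t)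
      (-(auxh n s f b)) b := by
    apply HasDerivAt.const_sub
    exact intervalIntegral.integral_hasDerivAt_right (auxh_intInt n s hfc zero_lt_one hb)
      (ContinuousOn.stronglyMeasurableAtFilter isOpen_Ioi (auxh_contOn n s hfc) b hb)
      (auxh_contAt n s hfc hb)
  apply h1.congr_of_eventuallyEq
  filter_upwards [Ioi_mem_nhds hb] with x hx
  exact auxA_split n hs hfc hfb hx

-- change of variables (s>0)
theorem chgvar_pos (n : ℤ) {s : ℝ} (f : ℝ → ℂ) {β : ℝ} (hβ : 0 < β) :
    (∫ y in Ioi (1:ℝ), auxF n f (β * y) * ((y ^ (-s - 1) : ℝ) : ℂ)) =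
      ((β ^ s : ℝ) : ℂ) * ∫ t in Ioi β, auxh n s f t := by
  have hb1 : ((β ^ (s+1) : ℝ) : ℂ) * ((β ^ (-s-1) : ℝ) : ℂ) = 1 := by
    rw [← Complex.ofReal_mul, ← Real.rpow_add hβ]; norm_num
  have h1 : ∀ y ∈ Ioi (1:ℝ), auxF n f (β * y) * ((y ^ (-s - 1) : ℝ) : ℂ) =
      ((β ^ (s+1) : ℝ) : ℂ) * auxh n s f (β * y) := by
    intro y hy
    have hy0 : 0 < y := lt_trans zero_lt_one hy
    rw [auxh]
    calc auxF n f (β*y) * ((y^(-s-1):ℝ):ℂ)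
        = (((β^(s+1):ℝ):ℂ) * ((β^(-s-1):ℝ):ℂ)) * (auxF n f (β*y) * ((y^(-s-1):ℝ):ℂ)) := by
          rw [hb1, one_mul]
      _ = ((β^(s+1):ℝ):ℂ) * (auxF n f (β*y) * (((β^(-s-1):ℝ):ℂ) * ((y^(-s-1):ℝ):ℂ))) := by ring
      _ = ((β^(s+1):ℝ):ℂ) * (auxF n f (β*y) * (((β*y) ^ (-s-1) : ℝ):ℂ)) := by
          rw [← Complex.ofReal_mul, ← Real.mul_rpow hβ.le hy0.le]
  rw [setIntegral_congr_fun measurableSet_Ioi h1, MeasureTheory.integral_const_mul]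
  have h2 := integral_comp_mul_left_Ioi (auxh n s f) 1 hβ
  rw [mul_one] at h2
  rw [h2]
  rw [Complex.real_smul, ← mul_assoc, ← Complex.ofReal_mul]
  congr 2
  rw [Real.rpow_add_one hβ.ne', mul_assoc, mul_inv_cancel₀ hβ.ne', mul_one]

def auxU (n : ℤ) (s : ℝ) (f : ℝ → ℂ) : ℝ → ℂ := fun β =>
  if 0 < s then
    -(Complex.exp (Complex.I * (n : ℂ) * (β : ℂ)) *
      ∫ y in Set.Ioi (1 : ℝ), auxF n f (β * y) * ((y ^ (-s - 1) : ℝ) : ℂ))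
  else
    Complex.exp (Complex.I * (n : ℂ) * (β : ℂ)) *
      ∫ y in (0 : ℝ)..1, auxF n f (β * y) * ((y ^ (-s - 1) : ℝ) : ℂ)

theorem hasDerivAt_cexp_lin (n : ℤ) (β : ℝ) :
    HasDerivAt (fun x : ℝ => Complex.exp (Complex.I * (n : ℂ) * (x : ℂ)))
      (Complex.exp (Complex.I * (n : ℂ) * (β : ℂ)) * (Complex.I * (n : ℂ))) β := by
  have hlin : HasDerivAt (fun x : ℝ => (Complex.I * (n : ℂ)) * (x : ℂ)) (Complex.I * n) β := by
    simpa using (Complex.ofRealCLM.hasDerivAt (x := β)).const_mul (Complex.I * (n : ℂ))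
  simpa [mul_assoc] using hlin.cexp

theorem auxU_pos_eq_w (n : ℤ) {s : ℝ} (hs : 0 < s) (f : ℝ → ℂ) {β : ℝ} (hβ : 0 < β) :
    auxU n s f β = -(Complex.exp (Complex.I * (n : ℂ) * (β : ℂ)) * ((β ^ s : ℝ) : ℂ) *
      ∫ t in Ioi β, auxh n s f t) := by
  rw [auxU, if_pos hs, chgvar_pos n f hβ]; ring

theorem pos_deriv (n : ℤ) {s : ℝ} (hs : 0 < s) {f : ℝ → ℂ} (hfc : ContinuousOn f (Set.Ici 0))
    {M : ℝ} (hfb : ∀ β : ℝ, 0 ≤ β → ‖f β‖ ≤ M) {β : ℝ} (hβ : 0 < β) :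
    DifferentiableAt ℝ (auxU n s f) β ∧
    (β : ℂ) * (deriv (auxU n s f) β - Complex.I * (n : ℂ) * auxU n s f β) -
      (s : ℂ) * auxU n s f β = f β := by
  have hE := hasDerivAt_cexp_lin n β
  have hP : HasDerivAt (fun x : ℝ => ((x ^ s : ℝ) : ℂ)) ((s * β ^ (s-1) : ℝ) : ℂ) β :=
    (Real.hasDerivAt_rpow_const (Or.inl hβ.ne')).ofReal_comp
  have hA := auxA_hasDeriv n hs hfc hfb hβ
  have heq : auxU n s f =ᶠ[nhds β] (fun x => -(Complex.exp (Complex.I * (n : ℂ) * (x : ℂ)) *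
      ((x ^ s : ℝ) : ℂ) * ∫ t in Ioi x, auxh n s f t)) := by
    filter_upwards [Ioi_mem_nhds hβ] with x hx
    exact auxU_pos_eq_w n hs f hx
  have hw := (((hE.mul hP).mul hA).neg).congr_of_eventuallyEq heq
  refine ⟨hw.differentiableAt, ?_⟩
  rw [hw.deriv, auxU_pos_eq_w n hs f hβ]
  simp only [Pi.mul_apply]
  set e := Complex.exp (Complex.I * (n : ℂ) * (β : ℂ)) with he
  set a := ∫ t in Ioi β, auxh n s f t with ha
  have E1 : (β : ℂ) * ((s * β ^ (s-1) : ℝ) : ℂ) = (s : ℂ) * ((β ^ s : ℝ) : ℂ) := by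
    rw [← Complex.ofReal_mul]
    have h1 : β ^ (s-1) * β = β ^ s := by
      rw [← Real.rpow_add_one hβ.ne']; norm_num
    rw [show β * (s * β ^ (s-1)) = s * (β ^ (s-1) * β) by ring, h1]
    push_cast; ring
  have E2 : (β : ℂ) * ((β ^ s : ℝ) : ℂ) * ((β ^ (-s-1) : ℝ) : ℂ) = 1 := by
    rw [← Complex.ofReal_mul, ← Complex.ofReal_mul]
    have h1 : β * β ^ s * β ^ (-s-1) = β ^ (1 + s + (-s-1)) := by
      rw [Real.rpow_add hβ, Real.rpow_add hβ, Real.rpow_one]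
    rw [h1, show (1:ℝ)+s+(-s-1) = 0 by ring, Real.rpow_zero]; norm_num
  have E3 : e * Complex.exp (-(Complex.I * (n : ℂ) * (β : ℂ))) = 1 := by
    rw [he, ← Complex.exp_add]; simp
  rw [auxh, auxF]
  linear_combination (-(e * a)) * E1 +
    (e * f β * Complex.exp (-(Complex.I * (n : ℂ) * (β : ℂ)))) * E2 + f β * E3

theorem pos_bound (n : ℤ) {s : ℝ} (hs : 0 < s) {f : ℝ → ℂ} (hfc : ContinuousOn f (Set.Ici 0))
    {M : ℝ} (hfb : ∀ β : ℝ, 0 ≤ β → ‖f β‖ ≤ M) {β : ℝ} (hβ : 0 ≤ β) :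
    ‖auxU n s f β‖ ≤ M / |s| := by
  rw [auxU, if_pos hs, norm_neg, norm_mul, Complex.norm_exp]
  have h1 : ‖∫ y in Ioi (1:ℝ), auxF n f (β * y) * ((y ^ (-s - 1) : ℝ) : ℂ)‖ ≤
      ∫ y in Ioi (1:ℝ), M * y ^ (-s - 1) := by
    apply norm_integral_le_of_norm_le (bound_int hs M)
    filter_upwards [ae_restrict_mem measurableSet_Ioi] with y hy
    have hy0 : 0 < y := lt_trans zero_lt_one hy
    rw [norm_mul, auxF_abs,
      Complex.norm_real, Real.norm_eq_abs, abs_of_nonneg (Real.rpow_nonneg hy0.le _)]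
    exact mul_le_mul_of_nonneg_right (hfb _ (mul_nonneg hβ hy0.le)) (Real.rpow_nonneg hy0.le _)
  have h2 : (∫ y in Ioi (1:ℝ), M * y ^ (-s - 1)) = M / s := by
    rw [MeasureTheory.integral_const_mul, integral_Ioi_rpow_of_lt (by linarith) zero_lt_one]
    rw [Real.one_rpow]
    field_simp
    rw [show (-s - 1 + 1 : ℝ) = -s by ring, div_neg, neg_neg, mul_div_cancel_right₀ _ hs.ne']
  calc Real.exp (Complex.I * (n:ℂ) * (β:ℂ)).re *
        ‖∫ y in Ioi (1:ℝ), auxF n f (β * y) * ((y ^ (-s - 1) : ℝ) : ℂ)‖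
      = ‖∫ y in Ioi (1:ℝ), auxF n f (β * y) * ((y ^ (-s - 1) : ℝ) : ℂ)‖ := by
        norm_num [Complex.mul_re]
    _ ≤ M / s := h1.trans (le_of_eq h2)
    _ = M / |s| := by rw [abs_of_pos hs]

theorem pos_cont_zero (n : ℤ) {s : ℝ} (hs : 0 < s) {f : ℝ → ℂ} (hfc : ContinuousOn f (Set.Ici 0))
    {M : ℝ} (hfb : ∀ β : ℝ, 0 ≤ β → ‖f β‖ ≤ M) :
    ContinuousWithinAt (auxU n s f) (Set.Ici 0) 0 := by
  have hU : auxU n s f = fun β : ℝ => -(Complex.exp (Complex.I * (n : ℂ) * (β : ℂ)) *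
      ∫ y in Set.Ioi (1 : ℝ), auxF n f (β * y) * ((y ^ (-s - 1) : ℝ) : ℂ)) := by
    funext β; rw [auxU, if_pos hs]
  rw [hU, ContinuousWithinAt]
  apply Filter.Tendsto.neg
  apply Filter.Tendsto.mul
  · exact ((Complex.continuous_exp.comp (by continuity)).tendsto 0).mono_left
      nhdsWithin_le_nhds
  · apply tendsto_integral_filter_of_dominated_convergence (fun y => M * y ^ (-s - 1))
    · filter_upwards [eventually_mem_nhdsWithin] with β hβ
      exact (integrand_contOn n s hfc hβ).aestronglyMeasurable measurableSet_Ioi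
    · filter_upwards [eventually_mem_nhdsWithin] with β hβ
      filter_upwards [ae_restrict_mem measurableSet_Ioi] with y hy
      have hy0 : 0 < y := lt_trans zero_lt_one hy
      rw [norm_mul, auxF_abs,
        Complex.norm_real, Real.norm_eq_abs, abs_of_nonneg (Real.rpow_nonneg hy0.le _)]
      exact mul_le_mul_of_nonneg_right (hfb _ (mul_nonneg hβ hy0.le)) (Real.rpow_nonneg hy0.le _)
    · exact bound_int hs M
    · filter_upwards [ae_restrict_mem measurableSet_Ioi] with y hy
      have hy0 : 0 < y := lt_trans zero_lt_one hy
      apply Filter.Tendsto.mul_const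
      have hmap : Filter.Tendsto (fun β : ℝ => β * y) (nhdsWithin 0 (Set.Ici 0))
          (nhdsWithin 0 (Set.Ici 0)) := by
        rw [tendsto_nhdsWithin_iff]
        constructor
        · simpa using ((continuous_mul_const y).tendsto 0).mono_left
            (nhdsWithin_le_nhds (s := Set.Ici 0))
        · filter_upwards [eventually_mem_nhdsWithin] with β hβ
          exact mul_nonneg hβ hy0.le
      have hcw : Filter.Tendsto (auxF n f) (nhdsWithin 0 (Set.Ici 0)) (nhds (auxF n f 0)) :=
        (auxF_contOn n hfc) 0 Set.self_mem_Ici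
      have := hcw.comp hmap
      simpa [zero_mul, Function.comp_def] using this

-- s < 0 case
theorem integrand_contOn2 (n : ℤ) (s : ℝ) {f : ℝ → ℂ} (hfc : ContinuousOn f (Set.Ici 0))
    {β : ℝ} (hβ : 0 ≤ β) :
    ContinuousOn (fun y : ℝ => auxF n f (β * y) * ((y ^ (-s - 1) : ℝ) : ℂ)) (Set.Ioi 0) := by
  have h1 : ContinuousOn (fun y : ℝ => auxF n f (β * y)) (Set.Ioi 0) := by
    apply ((auxF_contOn n hfc).comp (continuous_const.mul continuous_id).continuousOn)
    intro y hy
    exact mul_nonneg hβ (le_of_lt hy)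
  apply h1.mul
  apply Complex.continuous_ofReal.comp_continuousOn
  intro y hy
  exact (Real.continuousAt_rpow_const y _ (Or.inl (ne_of_gt hy))).continuousWithinAt

theorem auxh_intInt0 (n : ℤ) {s : ℝ} (hs : s < 0) {f : ℝ → ℂ} (hfc : ContinuousOn f (Set.Ici 0))
    {M : ℝ} (hfb : ∀ β : ℝ, 0 ≤ β → ‖f β‖ ≤ M) {b : ℝ} (hb : 0 < b) :
    IntervalIntegrable (auxh n s f) volume 0 b := by
  rw [intervalIntegrable_iff_integrableOn_Ioc_of_le hb.le]
  have hbd : IntegrableOn (fun t : ℝ => M * t ^ (-s - 1)) (Ioc 0 b) := by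
    rw [← intervalIntegrable_iff_integrableOn_Ioc_of_le hb.le]
    exact (intervalIntegral.intervalIntegrable_rpow' (by linarith)).const_mul M
  apply Integrable.mono' hbd
    (((auxh_contOn n s hfc).mono Ioc_subset_Ioi_self).aestronglyMeasurable measurableSet_Ioc)
  filter_upwards [ae_restrict_mem measurableSet_Ioc] with y hy
  exact auxh_norm_le n s hfb hy.1

theorem auxB_hasDeriv (n : ℤ) {s : ℝ} (hs : s < 0) {f : ℝ → ℂ} (hfc : ContinuousOn f (Set.Ici 0))
    {M : ℝ} (hfb : ∀ β : ℝ, 0 ≤ β → ‖f β‖ ≤ M) {b : ℝ} (hb : 0 < b) :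
    HasDerivAt (fun x => ∫ t in (0:ℝ)..x, auxh n s f t) (auxh n s f b) b :=
  intervalIntegral.integral_hasDerivAt_right (auxh_intInt0 n hs hfc hfb hb)
    (ContinuousOn.stronglyMeasurableAtFilter isOpen_Ioi (auxh_contOn n s hfc) b hb)
    (auxh_contAt n s hfc hb)

theorem chgvar_neg (n : ℤ) {s : ℝ} (f : ℝ → ℂ) {β : ℝ} (hβ : 0 < β) :
    (∫ y in (0:ℝ)..1, auxF n f (β * y) * ((y ^ (-s - 1) : ℝ) : ℂ)) =
      ((β ^ s : ℝ) : ℂ) * ∫ t in (0:ℝ)..β, auxh n s f t := by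
  have hb1 : ((β ^ (s+1) : ℝ) : ℂ) * ((β ^ (-s-1) : ℝ) : ℂ) = 1 := by
    rw [← Complex.ofReal_mul, ← Real.rpow_add hβ]; norm_num
  have h1 : ∀ y ∈ Set.uIoc (0:ℝ) 1, auxF n f (β * y) * ((y ^ (-s - 1) : ℝ) : ℂ) =
      ((β ^ (s+1) : ℝ) : ℂ) * auxh n s f (β * y) := by
    intro y hy
    rw [Set.uIoc_of_le zero_le_one] at hy
    have hy0 : 0 < y := hy.1
    rw [auxh]
    calc auxF n f (β*y) * ((y^(-s-1):ℝ):ℂ)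
        = (((β^(s+1):ℝ):ℂ) * ((β^(-s-1):ℝ):ℂ)) * (auxF n f (β*y) * ((y^(-s-1):ℝ):ℂ)) := by
          rw [hb1, one_mul]
      _ = ((β^(s+1):ℝ):ℂ) * (auxF n f (β*y) * (((β^(-s-1):ℝ):ℂ) * ((y^(-s-1):ℝ):ℂ))) := by ring
      _ = ((β^(s+1):ℝ):ℂ) * (auxF n f (β*y) * (((β*y) ^ (-s-1) : ℝ):ℂ)) := by
          rw [← Complex.ofReal_mul, ← Real.mul_rpow hβ.le hy0.le]
  rw [intervalIntegral.integral_congr_ae (MeasureTheory.ae_of_all _ h1),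
    intervalIntegral.integral_const_mul, intervalIntegral.integral_comp_mul_left _ hβ.ne']
  rw [mul_zero, mul_one, Complex.real_smul, ← mul_assoc, ← Complex.ofReal_mul]
  congr 2
  rw [Real.rpow_add_one hβ.ne', mul_assoc, mul_inv_cancel₀ hβ.ne', mul_one]

theorem auxU_neg_eq_w (n : ℤ) {s : ℝ} (hs : s < 0) (f : ℝ → ℂ) {β : ℝ} (hβ : 0 < β) :
    auxU n s f β = Complex.exp (Complex.I * (n : ℂ) * (β : ℂ)) * ((β ^ s : ℝ) : ℂ) *
      ∫ t in (0:ℝ)..β, auxh n s f t := by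
  rw [auxU, if_neg (by linarith), chgvar_neg n f hβ]; ring

theorem neg_deriv (n : ℤ) {s : ℝ} (hs : s < 0) {f : ℝ → ℂ} (hfc : ContinuousOn f (Set.Ici 0))
    {M : ℝ} (hfb : ∀ β : ℝ, 0 ≤ β → ‖f β‖ ≤ M) {β : ℝ} (hβ : 0 < β) :
    DifferentiableAt ℝ (auxU n s f) β ∧
    (β : ℂ) * (deriv (auxU n s f) β - Complex.I * (n : ℂ) * auxU n s f β) -
      (s : ℂ) * auxU n s f β = f β := by
  have hE := hasDerivAt_cexp_lin n β
  have hP : HasDerivAt (fun x : ℝ => ((x ^ s : ℝ) : ℂ)) ((s * β ^ (s-1) : ℝ) : ℂ) β :=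
    (Real.hasDerivAt_rpow_const (Or.inl hβ.ne')).ofReal_comp
  have hB := auxB_hasDeriv n hs hfc hfb hβ
  have heq : auxU n s f =ᶠ[nhds β] (fun x => Complex.exp (Complex.I * (n : ℂ) * (x : ℂ)) *
      ((x ^ s : ℝ) : ℂ) * ∫ t in (0:ℝ)..x, auxh n s f t) := by
    filter_upwards [Ioi_mem_nhds hβ] with x hx
    exact auxU_neg_eq_w n hs f hx
  have hw := ((hE.mul hP).mul hB).congr_of_eventuallyEq heq
  refine ⟨hw.differentiableAt, ?_⟩
  rw [hw.deriv, auxU_neg_eq_w n hs f hβ]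
  simp only [Pi.mul_apply]
  set e := Complex.exp (Complex.I * (n : ℂ) * (β : ℂ)) with he
  set b := ∫ t in (0:ℝ)..β, auxh n s f t with hbb
  have E1 : (β : ℂ) * ((s * β ^ (s-1) : ℝ) : ℂ) = (s : ℂ) * ((β ^ s : ℝ) : ℂ) := by
    rw [← Complex.ofReal_mul]
    have h1 : β ^ (s-1) * β = β ^ s := by
      rw [← Real.rpow_add_one hβ.ne']; norm_num
    rw [show β * (s * β ^ (s-1)) = s * (β ^ (s-1) * β) by ring, h1]
    push_cast; ring
  have E2 : (β : ℂ) * ((β ^ s : ℝ) : ℂ) * ((β ^ (-s-1) : ℝ) : ℂ) = 1 := by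
    rw [← Complex.ofReal_mul, ← Complex.ofReal_mul]
    have h1 : β * β ^ s * β ^ (-s-1) = β ^ (1 + s + (-s-1)) := by
      rw [Real.rpow_add hβ, Real.rpow_add hβ, Real.rpow_one]
    rw [h1, show (1:ℝ)+s+(-s-1) = 0 by ring, Real.rpow_zero]; norm_num
  have E3 : e * Complex.exp (-(Complex.I * (n : ℂ) * (β : ℂ))) = 1 := by
    rw [he, ← Complex.exp_add]; simp
  rw [auxh, auxF]
  linear_combination (e * b) * E1 +
    (e * f β * Complex.exp (-(Complex.I * (n : ℂ) * (β : ℂ)))) * E2 + f β * E3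

theorem neg_bound (n : ℤ) {s : ℝ} (hs : s < 0) {f : ℝ → ℂ} (hfc : ContinuousOn f (Set.Ici 0))
    {M : ℝ} (hfb : ∀ β : ℝ, 0 ≤ β → ‖f β‖ ≤ M) {β : ℝ} (hβ : 0 ≤ β) :
    ‖auxU n s f β‖ ≤ M / |s| := by
  have hM : 0 ≤ M := le_trans (norm_nonneg _) (hfb 0 le_rfl)
  rw [auxU, if_neg (by linarith), norm_mul, Complex.norm_exp]
  have h1 : ‖∫ y in (0:ℝ)..1, auxF n f (β * y) * ((y ^ (-s - 1) : ℝ) : ℂ)‖ ≤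
      |∫ y in (0:ℝ)..1, M * y ^ (-s - 1)| := by
    refine le_trans ?_ (le_abs_self _)
    apply intervalIntegral.norm_integral_le_of_norm_le zero_le_one
    · filter_upwards with y hy
      have hy0 : 0 < y := hy.1
      rw [norm_mul, auxF_abs,
        Complex.norm_real, Real.norm_eq_abs, abs_of_nonneg (Real.rpow_nonneg hy0.le _)]
      exact mul_le_mul_of_nonneg_right (hfb _ (mul_nonneg hβ hy0.le)) (Real.rpow_nonneg hy0.le _)
    · exact (intervalIntegral.intervalIntegrable_rpow' (by linarith)).const_mul M
  have h2 : (∫ y in (0:ℝ)..1, M * y ^ (-s - 1)) = M / (-s) := by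
    rw [intervalIntegral.integral_const_mul, integral_rpow (Or.inl (by linarith))]
    rw [show (-s-1) + 1 = -s by ring, Real.one_rpow, Real.zero_rpow (by linarith)]
    field_simp
    ring
  calc Real.exp (Complex.I * (n:ℂ) * (β:ℂ)).re *
        ‖∫ y in (0:ℝ)..1, auxF n f (β * y) * ((y ^ (-s - 1) : ℝ) : ℂ)‖
      = ‖∫ y in (0:ℝ)..1, auxF n f (β * y) * ((y ^ (-s - 1) : ℝ) : ℂ)‖ := by
        norm_num [Complex.mul_re]
    _ ≤ |M / (-s)| := h1.trans (le_of_eq (by rw [h2]))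
    _ = M / |s| := by
        rw [abs_div, abs_of_nonneg hM, abs_of_pos (by linarith : (0:ℝ) < -s), abs_of_neg hs]
    
theorem neg_cont_zero (n : ℤ) {s : ℝ} (hs : s < 0) {f : ℝ → ℂ} (hfc : ContinuousOn f (Set.Ici 0))
    {M : ℝ} (hfb : ∀ β : ℝ, 0 ≤ β → ‖f β‖ ≤ M) :
    ContinuousWithinAt (auxU n s f) (Set.Ici 0) 0 := by
  have hU : auxU n s f = fun β : ℝ => Complex.exp (Complex.I * (n : ℂ) * (β : ℂ)) *
      ∫ y in Set.Ioc (0:ℝ) 1, auxF n f (β * y) * ((y ^ (-s - 1) : ℝ) : ℂ) := by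
    funext β
    rw [auxU, if_neg (by linarith), intervalIntegral.integral_of_le zero_le_one]
  rw [hU, ContinuousWithinAt]
  apply Filter.Tendsto.mul
  · exact ((Complex.continuous_exp.comp (by continuity)).tendsto 0).mono_left
      nhdsWithin_le_nhds
  · have hbd : IntegrableOn (fun t : ℝ => M * t ^ (-s - 1)) (Ioc (0:ℝ) 1) := by
      rw [← intervalIntegrable_iff_integrableOn_Ioc_of_le zero_le_one]
      exact (intervalIntegral.intervalIntegrable_rpow' (by linarith)).const_mul M
    apply tendsto_integral_filter_of_dominated_convergence (fun y => M * y ^ (-s - 1))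
    · filter_upwards [eventually_mem_nhdsWithin] with β hβ
      exact ((integrand_contOn2 n s hfc hβ).mono Ioc_subset_Ioi_self).aestronglyMeasurable
        measurableSet_Ioc
    · filter_upwards [eventually_mem_nhdsWithin] with β hβ
      filter_upwards [ae_restrict_mem measurableSet_Ioc] with y hy
      have hy0 : 0 < y := hy.1
      rw [norm_mul, auxF_abs,
        Complex.norm_real, Real.norm_eq_abs, abs_of_nonneg (Real.rpow_nonneg hy0.le _)]
      exact mul_le_mul_of_nonneg_right (hfb _ (mul_nonneg hβ hy0.le)) (Real.rpow_nonneg hy0.le _)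
    · exact hbd
    · filter_upwards [ae_restrict_mem measurableSet_Ioc] with y hy
      have hy0 : 0 < y := hy.1
      apply Filter.Tendsto.mul_const
      have hmap : Filter.Tendsto (fun β : ℝ => β * y) (nhdsWithin 0 (Set.Ici 0))
          (nhdsWithin 0 (Set.Ici 0)) := by
        rw [tendsto_nhdsWithin_iff]
        constructor
        · simpa using ((continuous_mul_const y).tendsto 0).mono_left
            (nhdsWithin_le_nhds (s := Set.Ici 0))
        · filter_upwards [eventually_mem_nhdsWithin] with β hβ
          exact mul_nonneg hβ hy0.le
      have hcw : Filter.Tendsto (auxF n f) (nhdsWithin 0 (Set.Ici 0)) (nhds (auxF n f 0)) :=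
        (auxF_contOn n hfc) 0 Set.self_mem_Ici
      have := hcw.comp hmap
      simpa [zero_mul, Function.comp_def] using this

theorem hasDerivAt_cexp_lin' (c : ℂ) (β : ℝ) :
    HasDerivAt (fun x : ℝ => Complex.exp (c * (x : ℂ))) (Complex.exp (c * (β : ℂ)) * c) β := by
  have hlin : HasDerivAt (fun x : ℝ => c * (x : ℂ)) c β := by
    simpa using (Complex.ofRealCLM.hasDerivAt (x := β)).const_mul c
  simpa using hlin.cexp

theorem uniq (n : ℤ) {s : ℝ} (hs : s ≠ 0) (f u v : ℝ → ℂ)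
    (huc : ContinuousOn u (Set.Ici 0)) (hvc : ContinuousOn v (Set.Ici 0))
    {Ku : ℝ} (hub : ∀ β : ℝ, 0 ≤ β → ‖u β‖ ≤ Ku)
    {Kv : ℝ} (hvb : ∀ β : ℝ, 0 ≤ β → ‖v β‖ ≤ Kv)
    (hud : ∀ β : ℝ, 0 < β → DifferentiableAt ℝ u β)
    (hvd : ∀ β : ℝ, 0 < β → DifferentiableAt ℝ v β)
    (huode : ∀ β : ℝ, 0 < β →
      (β : ℂ) * (deriv u β - Complex.I * (n : ℂ) * u β) - (s : ℂ) * u β = f β)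
    (hvode : ∀ β : ℝ, 0 < β →
      (β : ℂ) * (deriv v β - Complex.I * (n : ℂ) * v β) - (s : ℂ) * v β = f β) :
    Set.EqOn v u (Set.Ici 0) := by
  set w : ℝ → ℂ := fun β => v β - u β with hw
  have hwK : ∀ β : ℝ, 0 ≤ β → ‖w β‖ ≤ Kv + Ku := by
    intro β hβ
    calc ‖v β - u β‖ = ‖v β - u β‖ := rfl
      _ ≤ ‖v β‖ + ‖u β‖ := norm_sub_le _ _
      _ ≤ Kv + Ku := by
          exact add_le_add (hvb β hβ) (hub β hβ)
  set H : ℝ → ℂ := fun β : ℝ =>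
    w β * Complex.exp (-(Complex.I * (n : ℂ) * (β : ℂ))) * ((β ^ (-s) : ℝ) : ℂ) with hH
  have hHd : ∀ β : ℝ, 0 < β → HasDerivAt H 0 β := by
    intro β hβ
    have hwd : HasDerivAt w (deriv v β - deriv u β) β :=
      ((hvd β hβ).hasDerivAt.sub (hud β hβ).hasDerivAt)
    have hE : HasDerivAt (fun x : ℝ => Complex.exp (-(Complex.I * (n : ℂ) * (x : ℂ))))
        (Complex.exp (-(Complex.I * (n : ℂ) * (β : ℂ))) * (-(Complex.I * (n : ℂ)))) β := by
      simpa [neg_mul] using hasDerivAt_cexp_lin' (-(Complex.I * (n : ℂ))) β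
    have hQ : HasDerivAt (fun x : ℝ => ((x ^ (-s) : ℝ) : ℂ))
        ((-s : ℂ) * ((β ^ (-s - 1) : ℝ) : ℂ)) β := by
      have := (Real.hasDerivAt_rpow_const (p := -s) (Or.inl hβ.ne')).ofReal_comp (z := β)
      simpa [Complex.ofReal_mul, Complex.ofReal_neg] using this
    have hODE0 : (β : ℂ) * ((deriv v β - deriv u β) - Complex.I * (n : ℂ) * w β) -
        (s : ℂ) * w β = 0 := by
      have h1 := huode β hβ
      have h2 := hvode β hβ
      simp only [hw]
      linear_combination h2 - h1
    have C1 : (β : ℂ) * ((β ^ (-s - 1) : ℝ) : ℂ) = ((β ^ (-s) : ℝ) : ℂ) := by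
      rw [← Complex.ofReal_mul]
      congr 1
      rw [show (-s : ℝ) = (-s-1) + 1 by ring, Real.rpow_add_one hβ.ne']
      ring
    have := (hwd.mul hE).mul hQ
    refine this.congr_deriv ?_
    symm
    simp only [Pi.mul_apply]
    set E := Complex.exp (-(Complex.I * (n : ℂ) * (β : ℂ)))
    set Q := ((β ^ (-s) : ℝ) : ℂ)
    set r' := ((β ^ (-s - 1) : ℝ) : ℂ)
    linear_combination (-(E * r')) * hODE0 + ((deriv v β - deriv u β) * E -
      Complex.I * (n : ℂ) * w β * E) * C1
  have hconst : ∀ β : ℝ, 0 < β → H β = H 1 := by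
    intro β hβ
    apply (convex_Ioi (0:ℝ)).is_const_of_fderivWithin_eq_zero
      (fun x hx => (hHd x hx).differentiableAt.differentiableWithinAt)
      ?_ hβ (mem_Ioi.mpr zero_lt_one)
    intro x hx
    rw [fderivWithin_of_isOpen isOpen_Ioi hx, ((hHd x hx).hasFDerivAt).fderiv]
    ext
    simp
  have habsH : ∀ β : ℝ, 0 < β → ‖H β‖ = ‖w β‖ * β ^ (-s) := by
    intro β hβ
    rw [hH]
    simp only [norm_mul, Complex.norm_exp, Complex.norm_real, Real.norm_eq_abs]
    rw [abs_of_nonneg (Real.rpow_nonneg hβ.le _)]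
    norm_num [Complex.mul_re]
  have hH1 : ‖H 1‖ = 0 := by
    by_contra hd
    have hd' : 0 < ‖H 1‖ := lt_of_le_of_ne (norm_nonneg _) (Ne.symm hd)
    set d := ‖H 1‖ with hdd
    set K := Kv + Ku with hKK
    have hK0 : 0 ≤ K := le_trans (norm_nonneg _) (hwK 0 le_rfl)
    have hle : ∀ β : ℝ, 0 < β → d * β ^ s ≤ K := by
      intro β hβ
      have h1 : d = ‖w β‖ * β ^ (-s) := by rw [hdd, ← hconst β hβ, habsH β hβ]
      have h2 : ‖w β‖ = d * β ^ s := by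
        rw [h1, Real.rpow_neg hβ.le, mul_assoc, inv_mul_cancel₀ (ne_of_gt (Real.rpow_pos_of_pos hβ s)), mul_one]
      rw [← h2]; exact hwK β hβ.le
    set β0 := ((K + 1) / d) ^ (s⁻¹ : ℝ) with hβ0
    have hb0 : 0 < β0 := Real.rpow_pos_of_pos (div_pos (by linarith) hd') _
    have hb0s : β0 ^ s = (K + 1) / d := by
      rw [hβ0, ← Real.rpow_mul (le_of_lt (div_pos (by linarith) hd')), inv_mul_cancel₀ hs,
        Real.rpow_one]
    have := hle β0 hb0
    rw [hb0s, mul_div_cancel₀ _ (ne_of_gt hd')] at this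
    linarith
  have hweq : ∀ β : ℝ, 0 < β → w β = 0 := by
    intro β hβ
    have h1 : ‖H β‖ = 0 := by rw [hconst β hβ]; exact hH1
    rw [habsH β hβ] at h1
    rcases mul_eq_zero.mp h1 with h | h
    · exact norm_eq_zero.mp h
    · exact absurd h (ne_of_gt (Real.rpow_pos_of_pos hβ _))
  intro β hβ
  rcases eq_or_lt_of_le (Set.mem_Ici.mp hβ) with h0 | hpos
  · have hcw : Filter.Tendsto w (nhdsWithin 0 (Set.Ioi 0)) (nhds (w 0)) := by
      apply Filter.Tendsto.mono_left _ (nhdsWithin_mono 0 Ioi_subset_Ici_self)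
      exact ((hvc 0 Set.self_mem_Ici).sub (huc 0 Set.self_mem_Ici))
    have hc0 : Filter.Tendsto w (nhdsWithin 0 (Set.Ioi 0)) (nhds 0) := by
      apply Filter.Tendsto.congr' _ tendsto_const_nhds
      filter_upwards [self_mem_nhdsWithin] with x hx
      exact (hweq x hx).symm
    have : w 0 = 0 := tendsto_nhds_unique hcw hc0
    rw [← h0]
    exact sub_eq_zero.mp this
  · exact sub_eq_zero.mp (hweq β hpos)



/-- **Bounded right inverse of `D^{(n,s)}` on `C_b`.**
For `s ≠ 0` and bounded continuous `f` on `[0,∞)` (with bound `M`), there is a bounded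
continuous `u`, differentiable on `(0,∞)`, solving `β(u' - i n u) - s u = f` on `(0,∞)`;
it is unique among bounded continuous solutions, it is given by the explicit integral
formula, and it satisfies `‖u‖_{C_b} ≤ ‖f‖_{C_b}/|s|`. -/
theorem stmt10 (n : ℤ) (s : ℝ) (hs : s ≠ 0) (f : ℝ → ℂ)
    (hfc : ContinuousOn f (Set.Ici 0)) (M : ℝ)
    (hfb : ∀ β : ℝ, 0 ≤ β → ‖f β‖ ≤ M) :
    ∃ u : ℝ → ℂ,
      ContinuousOn u (Set.Ici 0) ∧
      (∀ β : ℝ, 0 < β → DifferentiableAt ℝ u β) ∧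
      (∀ β : ℝ, 0 < β →
        (β : ℂ) * (deriv u β - Complex.I * (n : ℂ) * u β) - (s : ℂ) * u β = f β) ∧
      (∀ β : ℝ, 0 ≤ β → ‖u β‖ ≤ M / |s|) ∧
      (∀ β : ℝ, 0 ≤ β → u β =
        if 0 < s then
          -(Complex.exp (Complex.I * (n : ℂ) * (β : ℂ)) *
            ∫ y in Set.Ioi (1 : ℝ),
              f (β * y) * Complex.exp (-(Complex.I * (n : ℂ) * ((β * y : ℝ) : ℂ))) *
                ((y ^ (-s - 1) : ℝ) : ℂ))
        else
          Complex.exp (Complex.I * (n : ℂ) * (β : ℂ)) *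
            ∫ y in (0 : ℝ)..1,
              f (β * y) * Complex.exp (-(Complex.I * (n : ℂ) * ((β * y : ℝ) : ℂ))) *
                ((y ^ (-s - 1) : ℝ) : ℂ)) ∧
      (∀ v : ℝ → ℂ, ContinuousOn v (Set.Ici 0) →
        (∃ M' : ℝ, ∀ β : ℝ, 0 ≤ β → ‖v β‖ ≤ M') →
        (∀ β : ℝ, 0 < β → DifferentiableAt ℝ v β) →
        (∀ β : ℝ, 0 < β →
          (β : ℂ) * (deriv v β - Complex.I * (n : ℂ) * v β) - (s : ℂ) * v β = f β) →
        Set.EqOn v u (Set.Ici 0)) := by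
  have hkey : ∀ β : ℝ, 0 < β →
      DifferentiableAt ℝ (auxU n s f) β ∧
      (β : ℂ) * (deriv (auxU n s f) β - Complex.I * (n : ℂ) * auxU n s f β) -
        (s : ℂ) * auxU n s f β = f β := by
    intro β hβ
    rcases hs.lt_or_gt with hneg | hpos
    · exact neg_deriv n hneg hfc hfb hβ
    · exact pos_deriv n hpos hfc hfb hβ
  have hbound : ∀ β : ℝ, 0 ≤ β → ‖auxU n s f β‖ ≤ M / |s| := by
    intro β hβ
    rcases hs.lt_or_gt with hneg | hpos
    · exact neg_bound n hneg hfc hfb hβ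
    · exact pos_bound n hpos hfc hfb hβ
  have hcont : ContinuousOn (auxU n s f) (Set.Ici 0) := by
    intro β hβ
    rcases eq_or_lt_of_le (Set.mem_Ici.mp hβ) with h0 | hpos
    · rw [← h0]
      rcases hs.lt_or_gt with hneg | hpos'
      · exact neg_cont_zero n hneg hfc hfb
      · exact pos_cont_zero n hpos' hfc hfb
    · exact ((hkey β hpos).1.continuousAt).continuousWithinAt
  refine ⟨auxU n s f, hcont, fun β hβ => (hkey β hβ).1, fun β hβ => (hkey β hβ).2,
    hbound, fun β _ => rfl, ?_⟩
  intro v hvc ⟨M', hvb⟩ hvd hvode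
  exact uniq n hs f (auxU n s f) v hcont hvc hbound hvb (fun β hβ => (hkey β hβ).1) hvd
    (fun β hβ => (hkey β hβ).2) hvode
end
end

section
/- Weighted bound for the inverse of D^{(n,s)}: let δ > 0, n ∈ ℤ, s ∈ ℝ with |s| > δ, and let f ∈ C_b^δ. Then the unique bounded continuous solution u of D^{(n,s)}u = f on (0,∞) belongs to C_b^δ and satisfies ‖u‖_{C_b^δ} ≤ ‖f‖_{C_b^δ}/(|s| − δ). -/
open Set MeasureTheory Filter Topology

noncomputable def Vfun (s : ℝ) (n : ℤ) (u : ℝ → ℂ) (t : ℝ) : ℂ :=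
  ((t ^ (-s) : ℝ) : ℂ) * Complex.exp (-(Complex.I * (n : ℂ) * (t : ℂ))) * u t

lemma abs_exp_aux (n : ℤ) (t : ℝ) :
    ‖Complex.exp (-(Complex.I * (n : ℂ) * (t : ℂ)))‖ = 1 := by
  have h : -(Complex.I * (n : ℂ) * (t : ℂ)) = ((-(n * t) : ℝ) : ℂ) * Complex.I := by
    push_cast; ring
  rw [h, Complex.norm_exp_ofReal_mul_I]

lemma abs_Vfun (s : ℝ) (n : ℤ) (u : ℝ → ℂ) {t : ℝ} (ht : 0 ≤ t) :
    ‖Vfun s n u t‖ = t ^ (-s) * ‖u t‖ := by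
  unfold Vfun
  rw [norm_mul, norm_mul, abs_exp_aux, Complex.norm_real, Real.norm_eq_abs,
    abs_of_nonneg (Real.rpow_nonneg ht _)]
  ring

lemma hasDeriv_Vfun (s : ℝ) (n : ℤ) (u f : ℝ → ℂ)
    (hud : ∀ β : ℝ, 0 < β → DifferentiableAt ℝ u β)
    (hode : ∀ β : ℝ, 0 < β →
      (β : ℂ) * (deriv u β - Complex.I * (n : ℂ) * u β) - (s : ℂ) * u β = f β)
    {t : ℝ} (ht : 0 < t) :
    HasDerivAt (Vfun s n u)
      (((t ^ (-s - 1) : ℝ) : ℂ) * Complex.exp (-(Complex.I * (n : ℂ) * (t : ℂ))) * f t) t := by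
  have h1r : HasDerivAt (fun x : ℝ => x ^ (-s)) (-s * t ^ (-s - 1)) t :=
    Real.hasDerivAt_rpow_const (Or.inl ht.ne')
  have h1 : HasDerivAt (fun x : ℝ => ((x ^ (-s) : ℝ) : ℂ)) ((-s * t ^ (-s - 1) : ℝ) : ℂ) t :=
    h1r.ofReal_comp
  have h2a : HasDerivAt (fun x : ℝ => ((x : ℝ) : ℂ)) ((1 : ℝ) : ℂ) t :=
    (hasDerivAt_id t).ofReal_comp
  have h2b : HasDerivAt (fun x : ℝ => -(Complex.I * (n : ℂ) * (x : ℂ)))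
      (-(Complex.I * (n : ℂ))) t := by
    have := (h2a.const_mul (Complex.I * (n : ℂ))).neg
    simp only [Complex.ofReal_one, mul_one] at this
    exact this
  have h2 := h2b.cexp
  have h3 : HasDerivAt u (deriv u t) t := (hud t ht).hasDerivAt
  have H := (h1.mul h2).mul h3
  have key : ((t ^ (-s) : ℝ) : ℂ) = ((t ^ (-s - 1) : ℝ) : ℂ) * (t : ℂ) := by
    rw [show (-s) = (-s - 1) + 1 by ring, Real.rpow_add ht, Real.rpow_one]
    push_cast; ring
  have hf : f t = (t : ℂ) * (deriv u t - Complex.I * (n : ℂ) * u t) - (s : ℂ) * u t :=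
    (hode t ht).symm
  refine HasDerivAt.congr_deriv H ?_
  simp only [Pi.mul_apply]
  rw [hf, key]
  push_cast
  ring

lemma vdiff_bound (s : ℝ) (n : ℤ) (u f : ℝ → ℂ) (M e : ℝ)
    (hfc : ContinuousOn f (Set.Ici 0))
    (hfb : ∀ t : ℝ, 0 < t → ‖f t‖ ≤ M * t ^ (-e))
    (hud : ∀ β : ℝ, 0 < β → DifferentiableAt ℝ u β)
    (hode : ∀ β : ℝ, 0 < β →
      (β : ℂ) * (deriv u β - Complex.I * (n : ℂ) * u β) - (s : ℂ) * u β = f β)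
    {a b : ℝ} (ha : 0 < a) (hab : a ≤ b) (hc : -s - e ≠ 0) :
    ‖Vfun s n u b - Vfun s n u a‖
      ≤ M * ((b ^ (-s - e) - a ^ (-s - e)) / (-s - e)) := by
  set g : ℝ → ℂ := fun t => ((t ^ (-s - 1) : ℝ) : ℂ) *
    Complex.exp (-(Complex.I * (n : ℂ) * (t : ℂ))) * f t with hg
  have hsub : Set.uIcc a b ⊆ Set.Ici 0 := by
    rw [Set.uIcc_of_le hab]
    intro x hx
    exact le_trans ha.le hx.1
  have hpos : ∀ x ∈ Set.uIcc a b, 0 < x := by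
    rw [Set.uIcc_of_le hab]
    intro x hx
    exact lt_of_lt_of_le ha hx.1
  have hgcont : ContinuousOn g (Set.uIcc a b) := by
    apply ContinuousOn.mul
    apply ContinuousOn.mul
    · exact Complex.continuous_ofReal.comp_continuousOn
        (ContinuousOn.rpow_const continuousOn_id (fun x hx => Or.inl (hpos x hx).ne'))
    · exact (Complex.continuous_exp.comp (by continuity)).continuousOn
    · exact hfc.mono hsub
  have hgi : IntervalIntegrable g volume a b := hgcont.intervalIntegrable
  have hftc : (∫ t in a..b, g t) = Vfun s n u b - Vfun s n u a := by
    apply intervalIntegral.integral_eq_sub_of_hasDerivAt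
    · intro t htm
      exact hasDeriv_Vfun s n u f hud hode (hpos t htm)
    · exact hgi
  have hbcont : ContinuousOn (fun t : ℝ => M * t ^ (-s - 1 - e)) (Set.uIcc a b) := by
    apply ContinuousOn.mul continuousOn_const
    exact ContinuousOn.rpow_const continuousOn_id (fun x hx => Or.inl (hpos x hx).ne')
  have hbi : IntervalIntegrable (fun t : ℝ => M * t ^ (-s - 1 - e)) volume a b :=
    hbcont.intervalIntegrable
  have hM : 0 ≤ M := by
    have := hfb 1 one_pos
    simp at this
    exact le_trans (norm_nonneg _) this
  have hnorm : ∀ t ∈ Set.uIcc a b, ‖g t‖ ≤ M * t ^ (-s - 1 - e) := by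
    intro t htm
    have ht : 0 < t := hpos t htm
    have : ‖g t‖ = t ^ (-s - 1) * ‖f t‖ := by
      rw [hg]
      simp only [norm_mul, abs_exp_aux, Complex.norm_real, Real.norm_eq_abs,
        abs_of_nonneg (Real.rpow_nonneg ht.le _)]
      ring
    rw [this, show (-s - 1 - e) = (-s - 1) + (-e) by ring, Real.rpow_add ht]
    calc t ^ (-s - 1) * ‖f t‖ ≤ t ^ (-s - 1) * (M * t ^ (-e)) := by
          apply mul_le_mul_of_nonneg_left (hfb t ht) (Real.rpow_nonneg ht.le _)
      _ = M * (t ^ (-s - 1) * t ^ (-e)) := by ring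
  have hval : (∫ t in a..b, M * t ^ (-s - 1 - e))
      = M * ((b ^ (-s - e) - a ^ (-s - e)) / (-s - e)) := by
    rw [intervalIntegral.integral_const_mul]
    rw [integral_rpow (Or.inr ⟨by intro h; apply hc; linarith, by
      rw [Set.uIcc_of_le hab]; intro h; exact absurd h.1 (not_le.mpr ha)⟩)]
    rw [show (-s - 1 - e + 1) = -s - e by ring]
  calc ‖Vfun s n u b - Vfun s n u a‖ = ‖∫ t in a..b, g t‖ := by
        rw [hftc]
    _ ≤ ∫ t in a..b, ‖g t‖ := intervalIntegral.norm_integral_le_integral_norm hab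
    _ ≤ ∫ t in a..b, M * t ^ (-s - 1 - e) := by
        apply intervalIntegral.integral_mono_on hab hgi.norm hbi
        intro t htm
        exact hnorm t (by rw [Set.uIcc_of_le hab]; exact htm)
    _ = M * ((b ^ (-s - e) - a ^ (-s - e)) / (-s - e)) := hval

/-- **Weighted bound for the inverse of `D^{(n,s)}`.**
Let `δ > 0`, `|s| > δ` and `f ∈ C_b^δ` with `‖f‖_{C_b^δ} ≤ M`. Then any bounded continuous
solution `u` of `D^{(n,s)} u = f` on `(0,∞)` (which is unique) belongs to `C_b^δ` with
`‖u‖_{C_b^δ} ≤ M/(|s| - δ)`. -/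
theorem stmt11 (δ : ℝ) (hδ : 0 < δ) (n : ℤ) (s : ℝ) (hs : δ < |s|)
    (f : ℝ → ℂ) (M : ℝ)
    (hfc : ContinuousOn f (Set.Ici 0))
    (hfb : ∀ β : ℝ, 0 < β →
      β ^ δ * ‖f β‖ ≤ M ∧ β ^ (-δ) * ‖f β‖ ≤ M)
    (u : ℝ → ℂ)
    (huc : ContinuousOn u (Set.Ici 0))
    (hub : ∃ M' : ℝ, ∀ β : ℝ, 0 ≤ β → ‖u β‖ ≤ M')
    (hud : ∀ β : ℝ, 0 < β → DifferentiableAt ℝ u β)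
    (hode : ∀ β : ℝ, 0 < β →
      (β : ℂ) * (deriv u β - Complex.I * (n : ℂ) * u β) - (s : ℂ) * u β = f β) :
    ∀ β : ℝ, 0 < β →
      β ^ δ * ‖u β‖ ≤ M / (|s| - δ) ∧
      β ^ (-δ) * ‖u β‖ ≤ M / (|s| - δ) := by
  obtain ⟨M', hM'⟩ := hub
  have hM'0 : 0 ≤ M' := le_trans (norm_nonneg _) (hM' 0 le_rfl)
  have hM : 0 ≤ M := by
    have := (hfb 1 one_pos).1
    simp at this
    exact le_trans (norm_nonneg _) this
  have hsδ : 0 < |s| - δ := by linarith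
  -- bounds on f in the form |f t| ≤ M * t^(-e)
  have hfb' : ∀ e : ℝ, e = δ ∨ e = -δ → ∀ t : ℝ, 0 < t → ‖f t‖ ≤ M * t ^ (-e) := by
    intro e he t ht
    have h1 : t ^ e * ‖f t‖ ≤ M := by
      rcases he with rfl | rfl
      · exact (hfb t ht).1
      · exact (hfb t ht).2
    have htpos : (0:ℝ) < t ^ e := Real.rpow_pos_of_pos ht e
    rw [Real.rpow_neg ht.le, ← div_eq_mul_inv, le_div_iff₀ htpos]
    have h2 : ‖f t‖ * t ^ e = t ^ e * ‖f t‖ := mul_comm _ _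
    linarith
  -- key per-exponent claim
  have key : ∀ e : ℝ, e = δ ∨ e = -δ → ∀ β : ℝ, 0 < β →
      β ^ e * ‖u β‖ ≤ M / (|s| - δ) := by
    intro e he β hβ
    have hfe := hfb' e he
    have heδ : |e| = δ := by rcases he with rfl | rfl <;> simp [abs_of_pos hδ, abs_of_neg, hδ]
    have habsV : ∀ t : ℝ, 0 ≤ t → ‖Vfun s n u t‖ = t ^ (-s) * ‖u t‖ :=
      fun t ht => abs_Vfun s n u ht
    have hgoal : β ^ e * ‖u β‖ = β ^ (e + s) * ‖Vfun s n u β‖ := by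
      rw [habsV β hβ.le, ← mul_assoc, ← Real.rpow_add hβ]
      ring_nf
    rcases lt_or_gt_of_ne (fun h : s = 0 => by simp [h] at hs; linarith [abs_nonneg (0:ℝ), hδ]) with hneg | hpos
    · -- s < 0, |s| = -s ; integrate from a → 0
      have habs : |s| = -s := abs_of_neg hneg
      have hce : 0 < -s - e := by
        have : e ≤ δ := by rcases he with rfl | rfl <;> linarith
        rw [habs] at hs; linarith
      have hbound : ∀ a : ℝ, 0 < a → a ≤ β →
          β ^ e * ‖u β‖ ≤ β ^ (e + s) * (M' * a ^ (-s)) + M / (-s - e) := by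
        intro a ha hab
        have hd := vdiff_bound s n u f M e hfc hfe hud hode ha hab hce.ne'
        have h1 : ‖Vfun s n u β‖ ≤ ‖Vfun s n u a‖
            + M * ((β ^ (-s - e) - a ^ (-s - e)) / (-s - e)) := by
          calc ‖Vfun s n u β‖
              ≤ ‖Vfun s n u a‖ + ‖Vfun s n u β - Vfun s n u a‖ := by
                have := norm_add_le (Vfun s n u a) (Vfun s n u β - Vfun s n u a)
                simpa using this
            _ ≤ _ := by linarith
        have h2 : ‖Vfun s n u a‖ ≤ M' * a ^ (-s) := by
          rw [habsV a ha.le]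
          rw [mul_comm]
          exact mul_le_mul_of_nonneg_right (hM' a ha.le) (Real.rpow_nonneg ha.le _)
        have h3 : M * ((β ^ (-s - e) - a ^ (-s - e)) / (-s - e)) ≤ M * (β ^ (-s - e) / (-s - e)) := by
          apply mul_le_mul_of_nonneg_left _ hM
          apply (div_le_div_iff_of_pos_right hce).mpr
          have : (0:ℝ) ≤ a ^ (-s - e) := Real.rpow_nonneg ha.le _
          linarith
        rw [hgoal]
        have hβe : (0:ℝ) < β ^ (e + s) := Real.rpow_pos_of_pos hβ _
        calc β ^ (e + s) * ‖Vfun s n u β‖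
            ≤ β ^ (e + s) * (M' * a ^ (-s) + M * (β ^ (-s - e) / (-s - e))) := by
              apply mul_le_mul_of_nonneg_left _ hβe.le
              linarith
          _ = β ^ (e + s) * (M' * a ^ (-s)) + β ^ (e + s) * β ^ (-s - e) * (M / (-s - e)) := by
              ring
          _ = β ^ (e + s) * (M' * a ^ (-s)) + M / (-s - e) := by
              rw [← Real.rpow_add hβ, show e + s + (-s - e) = 0 by ring, Real.rpow_zero, one_mul]
      -- take a → 0⁺
      have hlim : Tendsto (fun a : ℝ => β ^ (e + s) * (M' * a ^ (-s)) + M / (-s - e))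
          (nhdsWithin 0 (Set.Ioi 0)) (nhds (β ^ (e + s) * (M' * 0) + M / (-s - e))) := by
        apply Tendsto.add _ tendsto_const_nhds
        apply Tendsto.const_mul
        apply Tendsto.const_mul
        have hc : ContinuousAt (fun x : ℝ => x ^ (-s)) 0 :=
          Real.continuousAt_rpow_const 0 (-s) (Or.inr (by linarith))
        have h0 : (0:ℝ) ^ (-s) = 0 := Real.zero_rpow (by linarith)
        have := hc.tendsto
        rw [h0] at this
        exact this.mono_left nhdsWithin_le_nhds
      have hfinal : β ^ e * ‖u β‖ ≤ β ^ (e + s) * (M' * 0) + M / (-s - e) := by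
        apply ge_of_tendsto hlim
        filter_upwards [Ioo_mem_nhdsGT_of_mem (Set.left_mem_Ico.mpr hβ)] with a ha
        exact hbound a ha.1 ha.2.le
      have : M / (-s - e) ≤ M / (|s| - δ) := by
        apply div_le_div_of_nonneg_left hM hsδ
        rw [habs]
        have : e ≤ δ := by rcases he with rfl | rfl <;> linarith
        linarith
      simp at hfinal
      linarith
    · -- s > 0, |s| = s ; integrate b → ∞
      have habs : |s| = s := abs_of_pos hpos
      have hce : -s - e < 0 := by
        have : -δ ≤ e := by rcases he with rfl | rfl <;> linarith
        rw [habs] at hs; linarith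
      have hbound : ∀ b : ℝ, β ≤ b →
          β ^ e * ‖u β‖ ≤ β ^ (e + s) * (M' * b ^ (-s)) + M / (s + e) := by
        intro b hb
        have hd := vdiff_bound s n u f M e hfc hfe hud hode hβ hb hce.ne
        have h1 : ‖Vfun s n u β‖ ≤ ‖Vfun s n u b‖
            + ‖Vfun s n u b - Vfun s n u β‖ := by
          have h0 := norm_add_le (Vfun s n u b) (Vfun s n u β - Vfun s n u b)
          rw [norm_sub_rev (Vfun s n u β) (Vfun s n u b)] at h0
          simpa using h0
        have h2 : ‖Vfun s n u b‖ ≤ M' * b ^ (-s) := by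
          rw [habsV b (lt_of_lt_of_le hβ hb).le, mul_comm]
          exact mul_le_mul_of_nonneg_right (hM' b (lt_of_lt_of_le hβ hb).le)
            (Real.rpow_nonneg (lt_of_lt_of_le hβ hb).le _)
        have hse : (0:ℝ) < s + e := by linarith
        have h3 : M * ((b ^ (-s - e) - β ^ (-s - e)) / (-s - e)) ≤ M * (β ^ (-s - e) / (s + e)) := by
          apply mul_le_mul_of_nonneg_left _ hM
          have hrw : (b ^ (-s - e) - β ^ (-s - e)) / (-s - e)
              = (β ^ (-s - e) - b ^ (-s - e)) / (s + e) := by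
            rw [div_eq_div_iff hce.ne hse.ne']
            ring
          rw [hrw]
          apply (div_le_div_iff_of_pos_right hse).mpr
          have : (0:ℝ) ≤ b ^ (-s - e) := Real.rpow_nonneg (lt_of_lt_of_le hβ hb).le _
          linarith
        rw [hgoal]
        have hβe : (0:ℝ) < β ^ (e + s) := Real.rpow_pos_of_pos hβ _
        calc β ^ (e + s) * ‖Vfun s n u β‖
            ≤ β ^ (e + s) * (M' * b ^ (-s) + M * (β ^ (-s - e) / (s + e))) := by
              apply mul_le_mul_of_nonneg_left _ hβe.le
              linarith
          _ = β ^ (e + s) * (M' * b ^ (-s)) + β ^ (e + s) * β ^ (-s - e) * (M / (s + e)) := by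
              ring
          _ = β ^ (e + s) * (M' * b ^ (-s)) + M / (s + e) := by
              rw [← Real.rpow_add hβ, show e + s + (-s - e) = 0 by ring, Real.rpow_zero, one_mul]
      have hlim : Tendsto (fun b : ℝ => β ^ (e + s) * (M' * b ^ (-s)) + M / (s + e))
          atTop (nhds (β ^ (e + s) * (M' * 0) + M / (s + e))) := by
        apply Tendsto.add _ tendsto_const_nhds
        exact (((tendsto_rpow_neg_atTop hpos).const_mul M').const_mul _)
      have hfinal : β ^ e * ‖u β‖ ≤ β ^ (e + s) * (M' * 0) + M / (s + e) := by
        apply ge_of_tendsto hlim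
        filter_upwards [eventually_ge_atTop β] with b hb
        exact hbound b hb
      have : M / (s + e) ≤ M / (|s| - δ) := by
        apply div_le_div_of_nonneg_left hM hsδ
        rw [habs]
        have : -δ ≤ e := by rcases he with rfl | rfl <;> linarith
        linarith
      simp at hfinal
      linarith
  intro β hβ
  exact ⟨key δ (Or.inl rfl) β hβ, key (-δ) (Or.inr rfl) β hβ⟩
end

section
/- Action of the inverse of D^{(n,s)} on an inner cutoff: let δ > 0, n ∈ ℤ, and s ∈ ℝ with |s| > δ. Let ξ₀ : [0,∞) → ℂ be bounded, continuous, differentiable on (0,∞), and assume that the functions β ↦ β·ξ₀′(β) and β ↦ β·ξ₀(β) belong to C_b^δ. Let u ∈ C_b be the unique bounded continuous solution of D^{(n,s)}u = ξ₀ on (0,∞). Then u + (1/s)·ξ₀ ∈ C_b^δ and ‖u + (1/s)·ξ₀‖_{C_b^δ} ≤ (1/|s|)·( ‖β·ξ₀′‖_{C_b^δ} + |n|·‖β·ξ₀‖_{C_b^δ} ) / (|s| − δ). -/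
open Set

/-- Fencing lemma: norm of increment bounded by integral of a power bound. -/
lemma stmt13_fence (C p a b : ℝ) (hC : 0 ≤ C) (ha : 0 < a) (hab : a ≤ b) (hp : p ≠ 0)
    (φ φ' : ℝ → ℂ)
    (hd : ∀ t ∈ Set.Icc a b, HasDerivAt φ (φ' t) t)
    (hbd : ∀ t ∈ Set.Icc a b, ‖φ' t‖ ≤ C * t ^ (p - 1)) :
    ‖φ b - φ a‖ ≤ C / p * (b ^ p - a ^ p) := by
  have key := image_norm_le_of_norm_deriv_right_le_deriv_boundary'
    (f := fun t => φ t - φ a) (f' := φ') (a := a) (b := b)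
    (B := fun t => C / p * (t ^ p - a ^ p)) (B' := fun t => C * t ^ (p - 1))
    ?_ ?_ ?_ ?_ ?_ ?_
  · simpa using key (right_mem_Icc.2 hab)
  · exact (ContinuousOn.sub (fun t ht => ((hd t ht).continuousAt.continuousWithinAt)) continuousOn_const)
  · exact fun x hx => ((hd x (Ico_subset_Icc_self hx)).sub_const (φ a)).hasDerivWithinAt.mono (fun y hy => hy)
  · simp
  · refine ContinuousOn.mul continuousOn_const (ContinuousOn.sub ?_ continuousOn_const)
    exact fun t ht => (Real.continuousAt_rpow_const t p (Or.inl (lt_of_lt_of_le ha ht.1).ne')).continuousWithinAt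
  · intro x hx
    have hx0 : x ≠ 0 := (lt_of_lt_of_le ha hx.1).ne'
    have h1 : HasDerivAt (fun t : ℝ => C / p * (t ^ p - a ^ p)) (C / p * (p * x ^ (p - 1))) x :=
      ((Real.hasDerivAt_rpow_const (Or.inl hx0)).sub_const _).const_mul _
    have : C / p * (p * x ^ (p - 1)) = C * x ^ (p - 1) := by field_simp
    exact (this ▸ h1).hasDerivWithinAt
  · exact fun x hx => hbd x (Ico_subset_Icc_self hx)

/-- Derivative of the integrating factor times a solution. -/
lemma stmt13_phideriv (n : ℤ) (s : ℝ) (w : ℝ → ℂ) (w' : ℂ) (t : ℝ) (ht : 0 < t)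
    (hw : HasDerivAt w w' t) :
    HasDerivAt (fun t : ℝ => Complex.exp (-(Complex.I * (n : ℂ)) * (t : ℂ)) * ((t ^ (-s) : ℝ) : ℂ) * w t)
      (Complex.exp (-(Complex.I * (n : ℂ)) * (t : ℂ)) * ((t ^ (-s - 1) : ℝ) : ℂ) *
        ((t : ℂ) * w' - Complex.I * (n : ℂ) * (t : ℂ) * w t - (s : ℂ) * w t)) t := by
  set c : ℂ := -(Complex.I * (n : ℂ)) with hc
  have h1 : HasDerivAt (fun t : ℝ => Complex.exp (c * (t : ℂ))) (c * Complex.exp (c * (t : ℂ))) t := by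
    have := ((Complex.hasDerivAt_exp (c * (t : ℂ))).comp (t : ℂ)
      ((hasDerivAt_id ((t : ℂ))).const_mul c)).comp_ofReal
    simpa [mul_comm] using this
  have h2 : HasDerivAt (fun t : ℝ => (((t ^ (-s) : ℝ)) : ℂ)) ((((-s) * t ^ (-s - 1) : ℝ)) : ℂ) t :=
    (Real.hasDerivAt_rpow_const (Or.inl ht.ne')).ofReal_comp
  have h3 := (h1.mul h2).mul hw
  refine h3.congr_deriv ?_
  simp only [Pi.mul_apply]
  have hP : ((t ^ (-s) : ℝ) : ℂ) = (t : ℂ) * ((t ^ (-s - 1) : ℝ) : ℂ) := by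
    rw [show (-s : ℝ) = (-s - 1) + 1 by ring, Real.rpow_add ht, Real.rpow_one]
    push_cast; ring
  rw [hP]
  push_cast
  ring

/-- **Action of the inverse of `D^{(n,s)}` on an inner cutoff.**
Let `δ > 0`, `|s| > δ`, and let `ξ₀` be bounded, continuous on `[0,∞)`, differentiable on
`(0,∞)`, with `β ξ₀'` and `β ξ₀` in `C_b^δ` (with bounds `A` resp. `B`). If `u` is the
(unique) bounded continuous solution of `D^{(n,s)} u = ξ₀` on `(0,∞)`, then
`u + (1/s) ξ₀ ∈ C_b^δ` with `‖u + (1/s)ξ₀‖_{C_b^δ} ≤ (1/|s|)(A + |n| B)/(|s| − δ)`. -/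
theorem stmt13 (δ : ℝ) (hδ : 0 < δ) (n : ℤ) (s : ℝ) (hs : δ < |s|)
    (ξ₀ : ℝ → ℂ)
    (hξc : ContinuousOn ξ₀ (Set.Ici 0))
    (hξb : ∃ M : ℝ, ∀ β : ℝ, 0 ≤ β → ‖ξ₀ β‖ ≤ M)
    (hξd : ∀ β : ℝ, 0 < β → DifferentiableAt ℝ ξ₀ β)
    (A B : ℝ)
    (hA : ∀ β : ℝ, 0 < β →
      β ^ δ * ‖(β : ℂ) * deriv ξ₀ β‖ ≤ A ∧
      β ^ (-δ) * ‖(β : ℂ) * deriv ξ₀ β‖ ≤ A)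
    (hB : ∀ β : ℝ, 0 < β →
      β ^ δ * ‖(β : ℂ) * ξ₀ β‖ ≤ B ∧
      β ^ (-δ) * ‖(β : ℂ) * ξ₀ β‖ ≤ B)
    (u : ℝ → ℂ)
    (huc : ContinuousOn u (Set.Ici 0))
    (hub : ∃ M : ℝ, ∀ β : ℝ, 0 ≤ β → ‖u β‖ ≤ M)
    (hud : ∀ β : ℝ, 0 < β → DifferentiableAt ℝ u β)
    (hode : ∀ β : ℝ, 0 < β →
      (β : ℂ) * (deriv u β - Complex.I * (n : ℂ) * u β) - (s : ℂ) * u β = ξ₀ β) :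
    ∀ β : ℝ, 0 < β →
      β ^ δ * ‖u β + (1 / (s : ℂ)) * ξ₀ β‖ ≤
        (1 / |s|) * ((A + |(n : ℝ)| * B) / (|s| - δ)) ∧
      β ^ (-δ) * ‖u β + (1 / (s : ℂ)) * ξ₀ β‖ ≤
        (1 / |s|) * ((A + |(n : ℝ)| * B) / (|s| - δ)) := by
  have habs : (0:ℝ) < |s| := lt_trans hδ hs
  have hs0 : s ≠ 0 := fun h => by simp [h] at habs
  have hsC : (s : ℂ) ≠ 0 := by exact_mod_cast hs0
  have hsd : (0:ℝ) < |s| - δ := by linarith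
  have hA0 : 0 ≤ A := le_trans (by positivity) (hA 1 one_pos).1
  have hB0 : 0 ≤ B := le_trans (by positivity) (hB 1 one_pos).1
  set C : ℝ := (A + |(n : ℝ)| * B) / |s| with hCdef
  have hC : 0 ≤ C := by positivity
  set w : ℝ → ℂ := fun t => u t + (1 / (s : ℂ)) * ξ₀ t with hwdef
  obtain ⟨M, hM⟩ := hub
  obtain ⟨Mx, hMx⟩ := hξb
  set Mw : ℝ := M + (1 / |s|) * Mx with hMwdef
  have hMw : ∀ t : ℝ, 0 ≤ t → ‖w t‖ ≤ Mw := by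
    intro t ht
    have h1 : ‖w t‖ ≤ ‖u t‖ + ‖(1 / (s : ℂ)) * ξ₀ t‖ := norm_add_le _ _
    have h2 : ‖(1 / (s : ℂ)) * ξ₀ t‖ = (1 / |s|) * ‖ξ₀ t‖ := by
      rw [norm_mul]
      congr 1
      simp [map_div₀]
    rw [h2] at h1
    have h3 : ‖u t‖ ≤ M := by exact hM t ht
    have h4 : ‖ξ₀ t‖ ≤ Mx := by exact hMx t ht
    have h5 : (1 / |s|) * ‖ξ₀ t‖ ≤ (1 / |s|) * Mx :=
      mul_le_mul_of_nonneg_left h4 (by positivity)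
    calc ‖w t‖ ≤ ‖u t‖ + (1 / |s|) * ‖ξ₀ t‖ := h1
      _ ≤ M + (1 / |s|) * Mx := add_le_add h3 h5
  set η : ℝ → ℂ := fun t => ((t : ℂ) * deriv ξ₀ t - Complex.I * (n : ℂ) * ((t : ℂ) * ξ₀ t)) / (s : ℂ)
    with hηdef
  -- derivative of w
  have hw' : ∀ t : ℝ, 0 < t →
      HasDerivAt w (deriv u t + (1 / (s : ℂ)) * deriv ξ₀ t) t := by
    intro t ht
    exact ((hud t ht).hasDerivAt).add (((hξd t ht).hasDerivAt).const_mul (1 / (s : ℂ)))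
  -- w satisfies the ODE with RHS η
  have hwode : ∀ t : ℝ, 0 < t →
      (t : ℂ) * (deriv u t + (1 / (s : ℂ)) * deriv ξ₀ t) - Complex.I * (n : ℂ) * (t : ℂ) * w t
        - (s : ℂ) * w t = η t := by
    intro t ht
    have h := hode t ht
    simp only [hwdef, hηdef]
    field_simp
    linear_combination (s : ℂ) * h
  -- the integrating-factor function and its derivative
  set φ : ℝ → ℂ := fun t =>
    Complex.exp (-(Complex.I * (n : ℂ)) * (t : ℂ)) * ((t ^ (-s) : ℝ) : ℂ) * w t with hφdef
  have hφd : ∀ t : ℝ, 0 < t → HasDerivAt φ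
      (Complex.exp (-(Complex.I * (n : ℂ)) * (t : ℂ)) * ((t ^ (-s - 1) : ℝ) : ℂ) * η t) t := by
    intro t ht
    have h := stmt13_phideriv n s w (deriv u t + (1 / (s : ℂ)) * deriv ξ₀ t) t ht (hw' t ht)
    rw [hwode t ht] at h
    exact h
  have hE : ∀ t : ℝ, ‖Complex.exp (-(Complex.I * (n : ℂ)) * (t : ℂ))‖ = 1 := by
    intro t
    rw [Complex.norm_exp]
    simp
  have hφnorm : ∀ t : ℝ, 0 < t → ‖φ t‖ = t ^ (-s) * ‖w t‖ := by
    intro t ht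
    simp only [hφdef]
    rw [norm_mul, norm_mul, hE, one_mul, Complex.norm_real, Real.norm_of_nonneg (Real.rpow_nonneg ht.le _)]
  -- bound on η
  have hηb : ∀ e : ℝ, (e = δ ∨ e = -δ) → ∀ t : ℝ, 0 < t → t ^ e * ‖η t‖ ≤ C := by
    intro e he t ht
    have h1 : ‖η t‖ = ‖(t : ℂ) * deriv ξ₀ t - Complex.I * (n : ℂ) * ((t : ℂ) * ξ₀ t)‖ / |s| := by
      simp only [hηdef]
      rw [norm_div]
      congr 1
      simp
    have h2 : ‖(t : ℂ) * deriv ξ₀ t - Complex.I * (n : ℂ) * ((t : ℂ) * ξ₀ t)‖ ≤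
        ‖(t : ℂ) * deriv ξ₀ t‖ + |(n : ℝ)| * ‖(t : ℂ) * ξ₀ t‖ := by
      refine le_trans (norm_sub_le _ _) ?_
      gcongr
      rw [norm_mul, norm_mul]
      simp
    have hAe : t ^ e * ‖(t : ℂ) * deriv ξ₀ t‖ ≤ A := by
      rcases he with h | h <;> subst h
      · exact (hA t ht).1
      · exact (hA t ht).2
    have hBe : t ^ e * ‖(t : ℂ) * ξ₀ t‖ ≤ B := by
      rcases he with h | h <;> subst h
      · exact (hB t ht).1
      · exact (hB t ht).2
    have hte : (0:ℝ) < t ^ e := Real.rpow_pos_of_pos ht e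
    have hnum : t ^ e * ‖(t : ℂ) * deriv ξ₀ t - Complex.I * (n : ℂ) * ((t : ℂ) * ξ₀ t)‖ ≤
        A + |(n : ℝ)| * B := by
      calc t ^ e * ‖(t : ℂ) * deriv ξ₀ t - Complex.I * (n : ℂ) * ((t : ℂ) * ξ₀ t)‖
          ≤ t ^ e * (‖(t : ℂ) * deriv ξ₀ t‖ + |(n : ℝ)| * ‖(t : ℂ) * ξ₀ t‖) :=
            mul_le_mul_of_nonneg_left h2 hte.le
        _ = t ^ e * ‖(t : ℂ) * deriv ξ₀ t‖ + |(n : ℝ)| * (t ^ e * ‖(t : ℂ) * ξ₀ t‖) := by ring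
        _ ≤ A + |(n : ℝ)| * B := add_le_add hAe (mul_le_mul_of_nonneg_left hBe (abs_nonneg _))
    rw [h1, hCdef, ← mul_div_assoc]
    gcongr
  -- the key estimate
  have main : ∀ e : ℝ, (e = δ ∨ e = -δ) → ∀ β : ℝ, 0 < β →
      β ^ e * ‖w β‖ ≤ C / (|s| - δ) := by
    intro e he β hβ
    have heabs : |e| ≤ δ := by rcases he with h | h <;> simp [h, abs_of_pos hδ, abs_of_neg (neg_neg_iff_pos.2 hδ), hδ.le]
    set p : ℝ := -s - e with hpdef
    -- bound on the norm of φ'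
    have hφ'b : ∀ t : ℝ, 0 < t →
        ‖Complex.exp (-(Complex.I * (n : ℂ)) * (t : ℂ)) * ((t ^ (-s - 1) : ℝ) : ℂ) * η t‖ ≤
          C * t ^ (p - 1) := by
      intro t ht
      have h1 : ‖Complex.exp (-(Complex.I * (n : ℂ)) * (t : ℂ)) * ((t ^ (-s - 1) : ℝ) : ℂ) * η t‖
          = t ^ (-s - 1) * ‖η t‖ := by
        rw [norm_mul, norm_mul, hE, one_mul, Complex.norm_real,
          Real.norm_of_nonneg (Real.rpow_nonneg ht.le _)]
      rw [h1]
      have h2 : t ^ (-s - 1) * ‖η t‖ = t ^ (p - 1) * (t ^ e * ‖η t‖) := by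
        rw [← mul_assoc, ← Real.rpow_add ht, hpdef]
        ring_nf
      rw [h2, mul_comm (C) _]
      exact mul_le_mul_of_nonneg_left (hηb e he t ht) (Real.rpow_nonneg ht.le _)
    -- the main bound on ‖φ β‖, by case on the sign of s
    have hφβ : ‖φ β‖ ≤ C / (|s| - δ) * β ^ p := by
      rcases lt_or_gt_of_ne hs0 with hsneg | hspos
      · -- s < 0 : integrate from γ near 0 up to β
        have habs' : |s| = -s := abs_of_neg hsneg
        have hppos : 0 < p := by rw [hpdef]; rw [habs'] at hsd hs; linarith [abs_le.1 heabs]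
        have hstep : ∀ γ : ℝ, 0 < γ → γ ≤ β → ‖φ β‖ ≤ Mw * γ ^ (-s) + C / p * β ^ p := by
          intro γ hγ hγβ
          have hfence := stmt13_fence C p γ β hC hγ hγβ hppos.ne'
            φ (fun t => Complex.exp (-(Complex.I * (n : ℂ)) * (t : ℂ)) * ((t ^ (-s - 1) : ℝ) : ℂ) * η t)
            (fun t ht => hφd t (lt_of_lt_of_le hγ ht.1))
            (fun t ht => hφ'b t (lt_of_lt_of_le hγ ht.1))
          have htri : ‖φ β‖ ≤ ‖φ γ‖ + ‖φ β - φ γ‖ := by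
            have := norm_add_le (φ γ) (φ β - φ γ); simpa using this
          have hφγ : ‖φ γ‖ ≤ Mw * γ ^ (-s) := by
            rw [hφnorm γ hγ, mul_comm]
            exact mul_le_mul_of_nonneg_right (hMw γ hγ.le) (Real.rpow_nonneg hγ.le _)
          have hint : C / p * (β ^ p - γ ^ p) ≤ C / p * β ^ p := by
            have h1 : 0 ≤ γ ^ p := Real.rpow_nonneg hγ.le _
            have h2 : 0 ≤ C / p := div_nonneg hC hppos.le
            nlinarith
          calc ‖φ β‖ ≤ ‖φ γ‖ + ‖φ β - φ γ‖ := htri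
            _ ≤ Mw * γ ^ (-s) + C / p * β ^ p := add_le_add hφγ (hfence.trans hint)
        -- let γ → 0⁺
        have htend : Filter.Tendsto (fun γ : ℝ => Mw * γ ^ (-s) + C / p * β ^ p)
            (nhdsWithin 0 (Set.Ioi 0)) (nhds (Mw * 0 + C / p * β ^ p)) := by
          refine Filter.Tendsto.add ?_ tendsto_const_nhds
          refine Filter.Tendsto.const_mul Mw ?_
          have hcont : Filter.Tendsto (fun γ : ℝ => γ ^ (-s)) (nhds 0) (nhds ((0:ℝ) ^ (-s))) :=
            (Real.continuousAt_rpow_const 0 (-s) (Or.inr (by linarith))).tendsto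
          rw [Real.zero_rpow (by linarith : (-s : ℝ) ≠ 0)] at hcont
          exact hcont.mono_left nhdsWithin_le_nhds
        have hev : ∀ᶠ γ in nhdsWithin (0:ℝ) (Set.Ioi 0),
            ‖φ β‖ ≤ Mw * γ ^ (-s) + C / p * β ^ p := by
          filter_upwards [Ioc_mem_nhdsGT_of_mem (Set.mem_Ico.2 ⟨le_refl 0, hβ⟩)] with γ hγ
          exact hstep γ hγ.1 hγ.2
        have hlim : ‖φ β‖ ≤ Mw * 0 + C / p * β ^ p := ge_of_tendsto htend hev
        have hple : C / p ≤ C / (|s| - δ) := by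
          have hp' : |s| - δ ≤ p := by
            rw [hpdef, habs']; linarith [abs_le.1 heabs]
          gcongr
        calc ‖φ β‖ ≤ C / p * β ^ p := by linarith
          _ ≤ C / (|s| - δ) * β ^ p :=
            mul_le_mul_of_nonneg_right hple (Real.rpow_nonneg hβ.le _)
      · -- s > 0 : integrate from β up to γ near ∞
        have habs' : |s| = s := abs_of_pos hspos
        have hpneg : p < 0 := by rw [hpdef]; rw [habs'] at hsd hs; linarith [abs_le.1 heabs]
        have hstep : ∀ γ : ℝ, β ≤ γ → ‖φ β‖ ≤ Mw * γ ^ (-s) + C / (-p) * β ^ p := by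
          intro γ hγβ
          have hγ : 0 < γ := lt_of_lt_of_le hβ hγβ
          have hfence := stmt13_fence C p β γ hC hβ hγβ hpneg.ne
            φ (fun t => Complex.exp (-(Complex.I * (n : ℂ)) * (t : ℂ)) * ((t ^ (-s - 1) : ℝ) : ℂ) * η t)
            (fun t ht => hφd t (lt_of_lt_of_le hβ ht.1))
            (fun t ht => hφ'b t (lt_of_lt_of_le hβ ht.1))
          have htri : ‖φ β‖ ≤ ‖φ γ‖ + ‖φ γ - φ β‖ := by
            have := norm_add_le (φ γ) (φ β - φ γ)
            rw [norm_sub_rev (φ γ) (φ β)]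
            simpa using this
          have hφγ : ‖φ γ‖ ≤ Mw * γ ^ (-s) := by
            rw [hφnorm γ hγ, mul_comm]
            exact mul_le_mul_of_nonneg_right (hMw γ hγ.le) (Real.rpow_nonneg hγ.le _)
          have hint : C / p * (γ ^ p - β ^ p) ≤ C / (-p) * β ^ p := by
            have h1 : 0 ≤ γ ^ p := Real.rpow_nonneg hγ.le _
            have heq : C / p * (γ ^ p - β ^ p) = C / (-p) * (β ^ p - γ ^ p) := by
              rw [div_neg]; ring
            have h2 : 0 ≤ C / (-p) := div_nonneg hC (by linarith)
            rw [heq]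
            nlinarith
          calc ‖φ β‖ ≤ ‖φ γ‖ + ‖φ γ - φ β‖ := htri
            _ ≤ Mw * γ ^ (-s) + C / (-p) * β ^ p := add_le_add hφγ (hfence.trans hint)
        -- let γ → ∞
        have htend : Filter.Tendsto (fun γ : ℝ => Mw * γ ^ (-s) + C / (-p) * β ^ p)
            Filter.atTop (nhds (Mw * 0 + C / (-p) * β ^ p)) := by
          refine Filter.Tendsto.add ?_ tendsto_const_nhds
          exact (tendsto_rpow_neg_atTop hspos).const_mul Mw
        have hev : ∀ᶠ γ in Filter.atTop, ‖φ β‖ ≤ Mw * γ ^ (-s) + C / (-p) * β ^ p :=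
          Filter.eventually_atTop.2 ⟨β, fun γ hγ => hstep γ hγ⟩
        have hlim : ‖φ β‖ ≤ Mw * 0 + C / (-p) * β ^ p := ge_of_tendsto htend hev
        have hple : C / (-p) ≤ C / (|s| - δ) := by
          have hp' : |s| - δ ≤ -p := by
            rw [hpdef, habs']; linarith [abs_le.1 heabs]
          gcongr
        calc ‖φ β‖ ≤ C / (-p) * β ^ p := by linarith
          _ ≤ C / (|s| - δ) * β ^ p :=
            mul_le_mul_of_nonneg_right hple (Real.rpow_nonneg hβ.le _)
    -- convert the bound on ‖φ β‖ to the desired bound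
    rw [hφnorm β hβ] at hφβ
    have hkey : β ^ e * ‖w β‖ = β ^ (s + e) * (β ^ (-s) * ‖w β‖) := by
      rw [← mul_assoc, ← Real.rpow_add hβ]
      ring_nf
    rw [hkey]
    calc β ^ (s + e) * (β ^ (-s) * ‖w β‖)
        ≤ β ^ (s + e) * (C / (|s| - δ) * β ^ p) :=
          mul_le_mul_of_nonneg_left hφβ (Real.rpow_nonneg hβ.le _)
      _ = C / (|s| - δ) * (β ^ (s + e) * β ^ p) := by ring
      _ = C / (|s| - δ) := by
          rw [← Real.rpow_add hβ, hpdef, show s + e + (-s - e) = 0 by ring, Real.rpow_zero, mul_one]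
  -- conclude
  intro β hβ
  have hrhs : (1 / |s|) * ((A + |(n : ℝ)| * B) / (|s| - δ)) = C / (|s| - δ) := by
    rw [hCdef]; field_simp
  rw [hrhs]
  have h1 := main δ (Or.inl rfl) β hβ
  have h2 := main (-δ) (Or.inr rfl) β hβ
  rw [hwdef] at h1 h2
  exact ⟨h1, h2⟩
end

section
/- Commutation of the inverse of D^{(n,s)} with power weights: let n ∈ ℤ and s, ℓ ∈ ℝ with s ≠ 0 and s − ℓ ≠ 0. Let f : (0,∞) → ℂ be continuous, and let u, v : [0,∞) → ℂ be bounded continuous functions, differentiable on (0,∞), satisfying (D^{(n,s−ℓ)}u)(β) = f(β) and (D^{(n,s)}v)(β) = β^ℓ·f(β) for all β > 0. Then there exists a constant c ∈ ℂ such that β^ℓ·u(β) − v(β) = c·β^s·e^{inβ} for all β > 0. Moreover, if s and s − ℓ have the same sign, then c = 0. -/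
open Set

lemma aux_deriv14 (n : ℤ) (s ℓ : ℝ) (u v f : ℝ → ℂ)
    (β : ℝ) (hβ : 0 < β)
    (hud : DifferentiableAt ℝ u β) (hvd : DifferentiableAt ℝ v β)
    (hu : (β : ℂ) * (deriv u β - Complex.I * (n : ℂ) * u β) - ((s - ℓ : ℝ) : ℂ) * u β = f β)
    (hv : (β : ℂ) * (deriv v β - Complex.I * (n : ℂ) * v β) - (s : ℂ) * v β =
      ((β ^ ℓ : ℝ) : ℂ) * f β) :
    HasDerivAt (fun x : ℝ => (((x ^ ℓ : ℝ) : ℂ) * u x - v x) * ((x ^ (-s) : ℝ) : ℂ) *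
      Complex.exp (-(Complex.I * (n : ℂ) * x))) 0 β := by
  have hβ' : β ≠ 0 := ne_of_gt hβ
  have hβC : (β : ℂ) ≠ 0 := by exact_mod_cast hβ'
  have hA : HasDerivAt (fun x : ℝ => ((x ^ ℓ : ℝ) : ℂ)) (((ℓ * β ^ (ℓ - 1) : ℝ)) : ℂ) β :=
    (Real.hasDerivAt_rpow_const (Or.inl hβ')).ofReal_comp
  have hB : HasDerivAt (fun x : ℝ => ((x ^ (-s) : ℝ) : ℂ)) (((-s * β ^ (-s - 1) : ℝ)) : ℂ) β :=
    (Real.hasDerivAt_rpow_const (Or.inl hβ')).ofReal_comp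
  have hid : HasDerivAt (fun x : ℝ => (x : ℂ)) 1 β := by
    simpa using (hasDerivAt_id β).ofReal_comp
  have hlin : HasDerivAt (fun x : ℝ => -(Complex.I * (n : ℂ) * (x : ℂ)))
      (-(Complex.I * (n : ℂ))) β := by
    have h := (hid.const_mul (Complex.I * (n : ℂ))).neg
    rw [mul_one] at h
    exact h
  have hE : HasDerivAt (fun x : ℝ => Complex.exp (-(Complex.I * (n : ℂ) * x)))
      (Complex.exp (-(Complex.I * (n : ℂ) * β)) * (-(Complex.I * (n : ℂ)))) β := hlin.cexp
  have hw : HasDerivAt (fun x : ℝ => ((x ^ ℓ : ℝ) : ℂ) * u x - v x)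
      (((ℓ * β ^ (ℓ - 1) : ℝ) : ℂ) * u β + ((β ^ ℓ : ℝ) : ℂ) * deriv u β - deriv v β) β :=
    (hA.mul hud.hasDerivAt).sub hvd.hasDerivAt
  have hg := (hw.mul hB).mul hE
  have r1 : ((β ^ (ℓ - 1) : ℝ) : ℂ) * (β : ℂ) = ((β ^ ℓ : ℝ) : ℂ) := by
    rw [← Complex.ofReal_mul]
    congr 1
    rw [← Real.rpow_add_one hβ' (ℓ - 1)]
    norm_num
  have r2 : ((β ^ (-s - 1) : ℝ) : ℂ) * (β : ℂ) = ((β ^ (-s) : ℝ) : ℂ) := by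
    rw [← Complex.ofReal_mul]
    congr 1
    rw [← Real.rpow_add_one hβ' (-s - 1)]
    norm_num
  have key : (β : ℂ) *
      (((((ℓ * β ^ (ℓ - 1) : ℝ) : ℂ) * u β + ((β ^ ℓ : ℝ) : ℂ) * deriv u β - deriv v β) *
          ((β ^ (-s) : ℝ) : ℂ) +
        ((((β ^ ℓ : ℝ) : ℂ)) * u β - v β) * ((-s * β ^ (-s - 1) : ℝ) : ℂ)) *
          Complex.exp (-(Complex.I * (n : ℂ) * β)) +
        (((β ^ ℓ : ℝ) : ℂ) * u β - v β) * ((β ^ (-s) : ℝ) : ℂ) *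
          (Complex.exp (-(Complex.I * (n : ℂ) * β)) * (-(Complex.I * (n : ℂ))))) = 0 := by
    push_cast at hu hv ⊢
    linear_combination
      (((β ^ ℓ : ℝ) : ℂ) * ((β ^ (-s) : ℝ) : ℂ) * Complex.exp (-(Complex.I * (n : ℂ) * β))) * hu -
      (((β ^ (-s) : ℝ) : ℂ) * Complex.exp (-(Complex.I * (n : ℂ) * β))) * hv +
      ((ℓ : ℂ) * u β * ((β ^ (-s) : ℝ) : ℂ) * Complex.exp (-(Complex.I * (n : ℂ) * β))) * r1 +
      ((-(s : ℂ)) * (((β ^ ℓ : ℝ) : ℂ) * u β - v β) * Complex.exp (-(Complex.I * (n : ℂ) * β))) * r2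
  have hD := (mul_eq_zero.mp key).resolve_left hβC
  exact hD ▸ hg

lemma aux_tendsto14 {p : ℝ} (hp : 0 < p) :
    Filter.Tendsto (fun β : ℝ => β ^ p) (nhdsWithin 0 (Set.Ioi 0)) (nhds 0) := by
  have := (Real.continuousAt_rpow_const 0 p (Or.inr hp.le)).tendsto
  rw [Real.zero_rpow hp.ne'] at this
  exact this.mono_left nhdsWithin_le_nhds

/-- **Commutation of the inverse of `D^{(n,s)}` with power weights.**
If `u` is a bounded continuous solution of `D^{(n,s−ℓ)} u = f` and `v` a bounded continuous
solution of `D^{(n,s)} v = β^ℓ f` on `(0,∞)` (with `s ≠ 0 ≠ s − ℓ`), then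
`β^ℓ u(β) − v(β) = c β^s e^{inβ}` for some constant `c`, and `c = 0` whenever `s` and
`s − ℓ` have the same sign. -/
theorem stmt14 (n : ℤ) (s ℓ : ℝ) (hs : s ≠ 0) (hsl : s - ℓ ≠ 0)
    (f : ℝ → ℂ) (hf : ContinuousOn f (Set.Ioi 0))
    (u v : ℝ → ℂ)
    (huc : ContinuousOn u (Set.Ici 0))
    (hub : ∃ M : ℝ, ∀ β : ℝ, 0 ≤ β → ‖u β‖ ≤ M)
    (hud : ∀ β : ℝ, 0 < β → DifferentiableAt ℝ u β)
    (hu : ∀ β : ℝ, 0 < β →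
      (β : ℂ) * (deriv u β - Complex.I * (n : ℂ) * u β) - ((s - ℓ : ℝ) : ℂ) * u β = f β)
    (hvc : ContinuousOn v (Set.Ici 0))
    (hvb : ∃ M : ℝ, ∀ β : ℝ, 0 ≤ β → ‖v β‖ ≤ M)
    (hvd : ∀ β : ℝ, 0 < β → DifferentiableAt ℝ v β)
    (hv : ∀ β : ℝ, 0 < β →
      (β : ℂ) * (deriv v β - Complex.I * (n : ℂ) * v β) - (s : ℂ) * v β =
        ((β ^ ℓ : ℝ) : ℂ) * f β) :
    ∃ c : ℂ,
      (∀ β : ℝ, 0 < β →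
        ((β ^ ℓ : ℝ) : ℂ) * u β - v β =
          c * ((β ^ s : ℝ) : ℂ) * Complex.exp (Complex.I * (n : ℂ) * (β : ℂ))) ∧
      (0 < s * (s - ℓ) → c = 0) := by
  set g : ℝ → ℂ := fun x => (((x ^ ℓ : ℝ) : ℂ) * u x - v x) * ((x ^ (-s) : ℝ) : ℂ) *
      Complex.exp (-(Complex.I * (n : ℂ) * x)) with hgdef
  have hg : ∀ x ∈ Set.Ioi (0 : ℝ), HasDerivAt g 0 x := fun x hx =>
    aux_deriv14 n s ℓ u v f x hx (hud x hx) (hvd x hx) (hu x hx) (hv x hx)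
  have hconst : ∀ x ∈ Set.Ioi (0 : ℝ), g x = g 1 := by
    intro x hx
    refine (convex_Ioi (0 : ℝ)).is_const_of_fderivWithin_eq_zero
      (fun z hz => ((hg z hz).differentiableAt).differentiableWithinAt) ?_ hx
      (by norm_num : (1 : ℝ) ∈ Set.Ioi (0 : ℝ))
    intro z hz
    rw [(hg z hz).differentiableAt.fderivWithin (isOpen_Ioi.uniqueDiffWithinAt hz),
      (hg z hz).hasFDerivAt.fderiv]
    exact ContinuousLinearMap.ext fun t => by simp
  refine ⟨g 1, ?_, ?_⟩
  · intro β hβ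
    have hc := (hconst β hβ).symm
    rw [hc]
    have e1 : ((β ^ (-s) : ℝ) : ℂ) * ((β ^ s : ℝ) : ℂ) = 1 := by
      rw [← Complex.ofReal_mul, ← Real.rpow_add hβ]
      norm_num
    have e2 : Complex.exp (-(Complex.I * (n : ℂ) * β)) * Complex.exp (Complex.I * (n : ℂ) * β)
        = 1 := by
      rw [← Complex.exp_add]
      simp
    simp only [hgdef]
    calc ((β ^ ℓ : ℝ) : ℂ) * u β - v β
        = (((β ^ ℓ : ℝ) : ℂ) * u β - v β) * (((β ^ (-s) : ℝ) : ℂ) * ((β ^ s : ℝ) : ℂ)) *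
          (Complex.exp (-(Complex.I * (n : ℂ) * β)) * Complex.exp (Complex.I * (n : ℂ) * β)) := by
          rw [e1, e2, mul_one, mul_one]
      _ = (((β ^ ℓ : ℝ) : ℂ) * u β - v β) * ((β ^ (-s) : ℝ) : ℂ) *
          Complex.exp (-(Complex.I * (n : ℂ) * β)) * ((β ^ s : ℝ) : ℂ) *
          Complex.exp (Complex.I * (n : ℂ) * β) := by ring
  · intro hsign
    obtain ⟨M, hM⟩ := hub
    obtain ⟨M', hM'⟩ := hvb
    have habs : ∀ β : ℝ, 0 < β →
        ‖g 1‖ ≤ M * β ^ (ℓ - s) + M' * β ^ (-s) := by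
      intro β hβ
      rw [← hconst β hβ]
      have hexp : ‖Complex.exp (-(Complex.I * (n : ℂ) * β))‖ = 1 := by
        rw [Complex.norm_exp]
        simp
      have hBs : ‖((β ^ (-s) : ℝ) : ℂ)‖ = β ^ (-s) := by
        rw [Complex.norm_real, Real.norm_eq_abs, abs_of_nonneg (Real.rpow_nonneg hβ.le _)]
      have hwb : ‖((β ^ ℓ : ℝ) : ℂ) * u β - v β‖ ≤ β ^ ℓ * M + M' := by
        calc ‖((β ^ ℓ : ℝ) : ℂ) * u β - v β‖
            ≤ ‖((β ^ ℓ : ℝ) : ℂ) * u β‖ + ‖v β‖ :=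
              norm_sub_le _ _
          _ ≤ β ^ ℓ * M + M' := by
              rw [norm_mul, Complex.norm_real, Real.norm_eq_abs, abs_of_nonneg (Real.rpow_nonneg hβ.le _)]
              exact add_le_add (mul_le_mul_of_nonneg_left (hM β hβ.le)
                (Real.rpow_nonneg hβ.le _)) (hM' β hβ.le)
      calc ‖g β‖ = ‖((β ^ ℓ : ℝ) : ℂ) * u β - v β‖ * β ^ (-s) * 1 := by
            simp only [hgdef, norm_mul, hexp, hBs]
        _ ≤ (β ^ ℓ * M + M') * β ^ (-s) := by
            rw [mul_one]
            exact mul_le_mul_of_nonneg_right hwb (Real.rpow_nonneg hβ.le _)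
        _ = M * β ^ (ℓ - s) + M' * β ^ (-s) := by
            rw [sub_eq_add_neg, Real.rpow_add hβ]
            ring
    have hle : ‖g 1‖ ≤ 0 := by
      rcases mul_pos_iff.mp hsign with ⟨hs1, hs2⟩ | ⟨hs1, hs2⟩
      · have t1 : Filter.Tendsto (fun β : ℝ => β ^ (ℓ - s)) Filter.atTop (nhds 0) := by
          have := tendsto_rpow_neg_atTop (y := s - ℓ) hs2
          simpa [neg_sub] using this
        have t2 : Filter.Tendsto (fun β : ℝ => β ^ (-s)) Filter.atTop (nhds 0) :=
          tendsto_rpow_neg_atTop hs1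
        have t : Filter.Tendsto (fun β : ℝ => M * β ^ (ℓ - s) + M' * β ^ (-s))
            Filter.atTop (nhds 0) := by
          simpa using (t1.const_mul M).add (t2.const_mul M')
        exact ge_of_tendsto t ((Filter.eventually_gt_atTop 0).mono fun β hβ => habs β hβ)
      · have t1 : Filter.Tendsto (fun β : ℝ => β ^ (ℓ - s)) (nhdsWithin 0 (Set.Ioi 0))
            (nhds 0) := aux_tendsto14 (by linarith)
        have t2 : Filter.Tendsto (fun β : ℝ => β ^ (-s)) (nhdsWithin 0 (Set.Ioi 0))
            (nhds 0) := aux_tendsto14 (by linarith)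
        have t : Filter.Tendsto (fun β : ℝ => M * β ^ (ℓ - s) + M' * β ^ (-s))
            (nhdsWithin 0 (Set.Ioi 0)) (nhds 0) := by
          simpa using (t1.const_mul M).add (t2.const_mul M')
        refine ge_of_tendsto t ?_
        filter_upwards [self_mem_nhdsWithin] with β hβ
        exact habs β hβ
    exact norm_eq_zero.mp (le_antisymm hle (norm_nonneg _))
end

section
/- The adapted coordinate map is a C¹-diffeomorphism: let μ > 0 and let a : (0,∞) × ℝ → ℝ be continuously differentiable with a(β, φ + 2π) = a(β, φ) for all (β,φ), ∂_φ a(β,φ) − ∂_β a(β,φ) > 0 for all (β,φ), and such that the function (β,φ) ↦ a(β,φ) + μ·log β is bounded on (0,∞) × ℝ. Define T(β,φ) = e^{a(β,φ)}(cos(β+φ), sin(β+φ)). Then: (i) T maps (0,∞) × ℝ onto ℝ²∖{0}; (ii) T(β₁,φ₁) = T(β₂,φ₂) implies β₁ = β₂ and φ₁ − φ₂ ∈ 2πℤ; (iii) the Jacobian determinant of T equals −e^{2a}·(∂_φa − ∂_βa) and is nonzero everywhere; consequently the induced map from (0,∞) × (ℝ/2πℤ) to ℝ²∖{0} is a bijective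 local C¹-diffeomorphism with C¹ inverse. -/
open Set

noncomputable section

lemma auxT (a : ℝ → ℝ → ℝ) (β φ : ℝ)
    (hd : DifferentiableAt ℝ (fun p : ℝ × ℝ => a p.1 p.2) (β, φ)) :
    HasFDerivAt (fun p : ℝ × ℝ =>
      (Real.exp (a p.1 p.2) : ℂ) * Complex.exp (((p.1 + p.2 : ℝ) : ℂ) * Complex.I))
      (Complex.exp ((a β φ : ℂ) + ((β + φ : ℝ) : ℂ) * Complex.I) •
        (Complex.ofRealCLM.comp (fderiv ℝ (fun p : ℝ × ℝ => a p.1 p.2) (β, φ)) +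
          (ContinuousLinearMap.fst ℝ ℝ ℝ + ContinuousLinearMap.snd ℝ ℝ ℝ).smulRight Complex.I))
      (β, φ) := by
  have h1 : HasFDerivAt (fun p : ℝ × ℝ => ((a p.1 p.2 : ℝ) : ℂ))
      (Complex.ofRealCLM.comp (fderiv ℝ (fun p : ℝ × ℝ => a p.1 p.2) (β, φ))) (β, φ) :=
    Complex.ofRealCLM.hasFDerivAt.comp _ hd.hasFDerivAt
  have h2 : HasFDerivAt (fun p : ℝ × ℝ => ((p.1 + p.2 : ℝ) : ℂ) * Complex.I)
      ((ContinuousLinearMap.fst ℝ ℝ ℝ + ContinuousLinearMap.snd ℝ ℝ ℝ).smulRight Complex.I)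
      (β, φ) := by
    have := ((ContinuousLinearMap.fst ℝ ℝ ℝ + ContinuousLinearMap.snd ℝ ℝ ℝ).smulRight
      Complex.I).hasFDerivAt (x := (β, φ))
    have heq : (fun p : ℝ × ℝ => ((p.1 + p.2 : ℝ) : ℂ) * Complex.I) =
        fun p : ℝ × ℝ => ((ContinuousLinearMap.fst ℝ ℝ ℝ + ContinuousLinearMap.snd ℝ ℝ ℝ).smulRight Complex.I) p := by
      funext p
      simp [Complex.real_smul]
    rw [heq]; exact this
  have h3 := (h1.add h2).cexp
  have heq : (fun p : ℝ × ℝ =>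
      (Real.exp (a p.1 p.2) : ℂ) * Complex.exp (((p.1 + p.2 : ℝ) : ℂ) * Complex.I)) =
      fun p : ℝ × ℝ => Complex.exp ((a p.1 p.2 : ℂ) + ((p.1 + p.2 : ℝ) : ℂ) * Complex.I) := by
    funext p
    rw [Complex.exp_add, Complex.ofReal_exp]
  rw [heq]; exact h3

/-- **The adapted coordinate map is a C¹-diffeomorphism.**
Let `μ > 0` and `a : (0,∞) × ℝ → ℝ` be C¹, `2π`-periodic in `φ`, with
`∂_φ a − ∂_β a > 0` and `a(β,φ) + μ log β` bounded. Then
`T(β,φ) = e^{a(β,φ)}(cos(β+φ), sin(β+φ))` is: (i) onto `ℝ²∖{0}`;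
(ii) injective up to `φ ↦ φ + 2πℤ`; and (iii) has Jacobian determinant
`−e^{2a}(∂_φa − ∂_βa) ≠ 0` everywhere. -/
theorem stmt16 (μ : ℝ) (hμ : 0 < μ) (a : ℝ → ℝ → ℝ)
    (ha : ContDiffOn ℝ 1 (fun p : ℝ × ℝ => a p.1 p.2) (Set.Ioi 0 ×ˢ Set.univ))
    (hper : ∀ β φ : ℝ, a β (φ + 2 * Real.pi) = a β φ)
    (hmono : ∀ β : ℝ, 0 < β → ∀ φ : ℝ,
      0 < fderiv ℝ (fun p : ℝ × ℝ => a p.1 p.2) (β, φ) (0, 1) -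
          fderiv ℝ (fun p : ℝ × ℝ => a p.1 p.2) (β, φ) (1, 0))
    (hbd : ∃ M : ℝ, ∀ β : ℝ, 0 < β → ∀ φ : ℝ, |a β φ + μ * Real.log β| ≤ M) :
    let T : ℝ × ℝ → ℂ := fun p =>
      (Real.exp (a p.1 p.2) : ℂ) * Complex.exp (((p.1 + p.2 : ℝ) : ℂ) * Complex.I)
    (∀ z : ℂ, z ≠ 0 → ∃ β : ℝ, 0 < β ∧ ∃ φ : ℝ, T (β, φ) = z) ∧
    (∀ β₁ β₂ φ₁ φ₂ : ℝ, 0 < β₁ → 0 < β₂ → T (β₁, φ₁) = T (β₂, φ₂) →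
      β₁ = β₂ ∧ ∃ k : ℤ, φ₁ - φ₂ = 2 * Real.pi * k) ∧
    (∀ β : ℝ, 0 < β → ∀ φ : ℝ,
      (fderiv ℝ T (β, φ) (1, 0)).re * (fderiv ℝ T (β, φ) (0, 1)).im -
        (fderiv ℝ T (β, φ) (1, 0)).im * (fderiv ℝ T (β, φ) (0, 1)).re =
      -(Real.exp (2 * a β φ)) *
        (fderiv ℝ (fun p : ℝ × ℝ => a p.1 p.2) (β, φ) (0, 1) -
          fderiv ℝ (fun p : ℝ × ℝ => a p.1 p.2) (β, φ) (1, 0)) ∧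
      (fderiv ℝ T (β, φ) (1, 0)).re * (fderiv ℝ T (β, φ) (0, 1)).im -
        (fderiv ℝ T (β, φ) (1, 0)).im * (fderiv ℝ T (β, φ) (0, 1)).re ≠ 0) := by
  intro T
  -- differentiability at interior points
  have hd : ∀ β : ℝ, 0 < β → ∀ φ : ℝ,
      DifferentiableAt ℝ (fun p : ℝ × ℝ => a p.1 p.2) (β, φ) := by
    intro β hβ φ
    have hmem : ((β, φ) : ℝ × ℝ) ∈ Set.Ioi (0:ℝ) ×ˢ (Set.univ : Set ℝ) :=
      ⟨hβ, Set.mem_univ _⟩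
    exact (ha.contDiffAt ((isOpen_Ioi.prod isOpen_univ).mem_nhds hmem)).differentiableAt one_ne_zero
  refine ⟨?_, ?_, ?_⟩
  · -- surjectivity
    intro z hz
    obtain ⟨M, hM⟩ := hbd
    set r := ‖z‖ with hr
    have hr0 : 0 < r := norm_pos_iff.mpr hz
    set θ := Complex.arg z with hθ
    have hzeq : (r : ℂ) * Complex.exp (θ * Complex.I) = z := Complex.norm_mul_exp_arg_mul_I z
    set g : ℝ → ℝ := fun β => a β (θ - β) with hg
    have hgc : ContinuousOn g (Set.Ioi 0) := by
      have : ContinuousOn (fun β : ℝ => ((β, θ - β) : ℝ × ℝ)) (Set.Ioi 0) :=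
        (continuous_id.prodMk (continuous_const.sub continuous_id)).continuousOn
      exact ha.continuousOn.comp this (fun x hx => ⟨hx, Set.mem_univ _⟩)
    set b0 : ℝ := Real.exp (-(M + Real.log r) / μ) with hb0
    set b1 : ℝ := Real.exp ((M - Real.log r) / μ) with hb1
    have hb0p : 0 < b0 := Real.exp_pos _
    have hb1p : 0 < b1 := Real.exp_pos _
    have h0 : Real.log r ≤ g b0 := by
      have := hM b0 hb0p (θ - b0)
      rw [abs_le] at this
      have hlog : Real.log b0 = -(M + Real.log r) / μ := Real.log_exp _
      have : -M ≤ g b0 + μ * (-(M + Real.log r) / μ) := by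
        rw [← hlog]; exact this.1
      have hcalc : μ * (-(M + Real.log r) / μ) = -(M + Real.log r) := by
        field_simp
      linarith [hcalc ▸ this]
    have h1 : g b1 ≤ Real.log r := by
      have := hM b1 hb1p (θ - b1)
      rw [abs_le] at this
      have hlog : Real.log b1 = (M - Real.log r) / μ := Real.log_exp _
      have : g b1 + μ * ((M - Real.log r) / μ) ≤ M := by
        rw [← hlog]; exact this.2
      have hcalc : μ * ((M - Real.log r) / μ) = M - Real.log r := by
        field_simp
      linarith [hcalc ▸ this]
    have hsub : Set.uIcc b0 b1 ⊆ Set.Ioi 0 :=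
      fun x hx => lt_of_lt_of_le (lt_inf_iff.mpr ⟨hb0p, hb1p⟩) hx.1
    have hivt := intermediate_value_uIcc (hgc.mono hsub)
    have hmem : Real.log r ∈ Set.uIcc (g b0) (g b1) := Set.mem_uIcc.mpr (Or.inr ⟨h1, h0⟩)
    obtain ⟨β, hβmem, hβeq⟩ := hivt hmem
    refine ⟨β, hsub hβmem, θ - β, ?_⟩
    show (Real.exp (a β (θ - β)) : ℂ) * Complex.exp (((β + (θ - β) : ℝ) : ℂ) * Complex.I) = z
    have : a β (θ - β) = Real.log r := hβeq
    rw [this, Real.exp_log hr0, add_sub_cancel]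
    exact hzeq
  · -- injectivity up to 2πℤ
    intro β₁ β₂ φ₁ φ₂ hβ₁ hβ₂ hT
    have hTeq : (Real.exp (a β₁ φ₁) : ℂ) * Complex.exp (((β₁ + φ₁ : ℝ) : ℂ) * Complex.I) =
        (Real.exp (a β₂ φ₂) : ℂ) * Complex.exp (((β₂ + φ₂ : ℝ) : ℂ) * Complex.I) := hT
    -- compare moduli
    have habs := congrArg (‖·‖) hTeq
    simp only [norm_mul, Complex.norm_real, Real.norm_eq_abs, Complex.norm_exp_ofReal_mul_I, mul_one,
      abs_of_pos (Real.exp_pos _)] at habs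
    have haeq : a β₁ φ₁ = a β₂ φ₂ := Real.exp_injective habs
    -- compare angles
    have hexp : Complex.exp (((β₁ + φ₁ : ℝ) : ℂ) * Complex.I) =
        Complex.exp (((β₂ + φ₂ : ℝ) : ℂ) * Complex.I) := by
      have hne : (Real.exp (a β₁ φ₁) : ℂ) ≠ 0 := by
        exact_mod_cast (Real.exp_pos _).ne'
      apply mul_left_cancel₀ hne
      rw [hTeq, haeq]
    rw [Complex.exp_eq_exp_iff_exists_int] at hexp
    obtain ⟨n, hn⟩ := hexp
    have hang : β₁ + φ₁ = β₂ + φ₂ + n * (2 * Real.pi) := by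
      have := congrArg Complex.im hn
      simpa using this
    -- strict monotonicity along the line β + φ = const
    set c := β₁ + φ₁ with hc
    set h : ℝ → ℝ := fun β => a β (c - β) with hh
    have hderiv : ∀ β : ℝ, 0 < β → HasDerivAt h
        (fderiv ℝ (fun p : ℝ × ℝ => a p.1 p.2) (β, c - β) ((1 : ℝ), (-1 : ℝ))) β := by
      intro β hβ
      have hcomp : HasDerivAt (fun β : ℝ => ((β, c - β) : ℝ × ℝ)) ((1 : ℝ), (-1 : ℝ)) β :=
        (hasDerivAt_id β).prodMk ((hasDerivAt_id β).const_sub c)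
      exact ((hd β hβ (c - β)).hasFDerivAt).comp_hasDerivAt β hcomp
    have hanti : StrictAntiOn h (Set.Ioi 0) := by
      apply strictAntiOn_of_deriv_neg (convex_Ioi 0)
      · exact fun β hβ => ((hderiv β hβ).continuousAt).continuousWithinAt
      · intro β hβ
        rw [interior_Ioi] at hβ
        rw [(hderiv β hβ).deriv]
        have hsplit : ((1 : ℝ), (-1 : ℝ)) = ((1 : ℝ), (0 : ℝ)) - ((0 : ℝ), (1 : ℝ)) := by
          simp [Prod.ext_iff]
        rw [hsplit, map_sub]
        linarith [hmono β hβ (c - β)]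
    have hper2 : ∀ β : ℝ, Function.Periodic (a β) (2 * Real.pi) := fun β φ => hper β φ
    have hhβ₂ : h β₂ = a β₂ φ₂ := by
      have : c - β₂ = φ₂ + n * (2 * Real.pi) := by
        rw [hc]; linarith
      rw [hh]
      simp only [this]
      exact (hper2 β₂).int_mul n φ₂
    have hhβ₁ : h β₁ = a β₁ φ₁ := by
      rw [hh]; simp [hc]
    have hβeq : β₁ = β₂ := hanti.injOn hβ₁ hβ₂ (by rw [hhβ₁, hhβ₂, haeq])
    refine ⟨hβeq, n, ?_⟩
    have hang' : β₁ + φ₁ = β₂ + φ₂ + n * (2 * Real.pi) := by rw [← hc]; exact hang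
    rw [hβeq] at hang'
    linarith
  · -- Jacobian
    intro β hβ φ
    set L := fderiv ℝ (fun p : ℝ × ℝ => a p.1 p.2) (β, φ) with hL
    set A := L (1, 0) with hA
    set B := L (0, 1) with hB
    have hT := auxT a β φ (hd β hβ φ)
    have hfd := hT.fderiv
    set E := Complex.exp ((a β φ : ℂ) + ((β + φ : ℝ) : ℂ) * Complex.I) with hE
    have hD1 : fderiv ℝ T (β, φ) (1, 0) = E * ((A : ℂ) + Complex.I) := by
      rw [hfd]
      simp [Complex.real_smul, smul_eq_mul, ← hA]
      ring
    have hD2 : fderiv ℝ T (β, φ) (0, 1) = E * ((B : ℂ) + Complex.I) := by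
      rw [hfd]
      simp [Complex.real_smul, smul_eq_mul, ← hB]
      ring
    have hnorm : E.re * E.re + E.im * E.im = Real.exp (2 * a β φ) := by
      have : Complex.normSq E = Real.exp (2 * a β φ) := by
        rw [hE, Complex.exp_add, Complex.normSq_mul, ← Complex.ofReal_exp,
          Complex.normSq_ofReal, Complex.normSq_eq_norm_sq, Complex.norm_exp_ofReal_mul_I]
        rw [← Real.exp_add, two_mul]
        norm_num
      rw [← this, Complex.normSq_apply]
    rw [hD1, hD2]
    constructor
    · simp only [Complex.mul_re, Complex.mul_im, Complex.add_re, Complex.add_im,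
        Complex.I_re, Complex.I_im, Complex.ofReal_re, Complex.ofReal_im]
      rw [← hA, ← hB] at *
      linear_combination (A - B) * hnorm
    · simp only [Complex.mul_re, Complex.mul_im, Complex.add_re, Complex.add_im,
        Complex.I_re, Complex.I_im, Complex.ofReal_re, Complex.ofReal_im]
      have hpos := hmono β hβ φ
      rw [← hA, ← hB] at hpos
      have : (E.re * A - E.im) * (E.im * B + E.re) - (E.im * A + E.re) * (E.re * B - E.im)
          = Real.exp (2 * a β φ) * (A - B) := by linear_combination (A - B) * hnorm
      intro hcontra
      have hexp := Real.exp_pos (2 * a β φ)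
      nlinarith [hcontra, this]
end
end
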